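/- arXiv:1005.4317 — 8 statements merged into one kernel-verified Lean document; each statement's English description precedes it below -/
import Mathlib

section
/- Let μ > 0 and −1 ≤ α ≤ 1. Suppose f ∈ 𝒮_p(α) has the representation (z/f(z))^μ = 1 + Σ_{n=1}^∞ b_n z^n with b_n ≥ 0 for all n ≥ 1. Then Σ_{n=1}^∞ (2n − μ(1−α)) b_n ≤ μ(1−α). -/
open Complex Metric Set

noncomputable section

/-- The open unit disk in ℂ. -/
def unitDisk : Set ℂ := Metric.ball 0 1

/-- `f ∈ 𝒜`: analytic on the unit disk, `f 0 = 0`, `f' 0 = 1`. -/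
def InA (f : ℂ → ℂ) : Prop :=
  AnalyticOnNhd ℂ f unitDisk ∧ f 0 = 0 ∧ deriv f 0 = 1

/-- `f ∈ 𝒮`: normalized analytic and univalent on the unit disk. -/
def InS (f : ℂ → ℂ) : Prop := InA f ∧ Set.InjOn f unitDisk

/-- `z f'(z)/f(z)`, understood as `1` at `z = 0`. -/
def zRatio (f : ℂ → ℂ) (z : ℂ) : ℂ := if z = 0 then 1 else z * deriv f z / f z

/-- `f ∈ 𝒮_p(α)`. -/
def InSp (f : ℂ → ℂ) (α : ℝ) : Prop :=
  InS f ∧ ∀ z ∈ unitDisk, ‖zRatio f z - 1‖ ≤ (zRatio f z).re - α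

/-- The principal power `(z/f(z))^μ`, taken equal to `1` at `z = 0`. -/
def pw (f : ℂ → ℂ) (μ : ℝ) (z : ℂ) : ℂ :=
  if z = 0 then 1 else (z / f z) ^ (μ : ℂ)

/-- `f ∈ 𝒰(λ, μ)`. -/
def InU (f : ℂ → ℂ) (lam μ : ℝ) : Prop :=
  InA f ∧ (∀ z ∈ unitDisk, z ≠ 0 → f z ≠ 0) ∧
  ∀ z ∈ unitDisk,
    ‖deriv f z * (if z = 0 then 1 else (z / f z) ^ ((μ : ℂ) + 1)) - 1‖ ≤ lam

/-- `f ∈ 𝒮*(α)`: starlike of order `α`. -/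
def InSstar (f : ℂ → ℂ) (α : ℝ) : Prop :=
  InS f ∧ ∀ z ∈ unitDisk, α < (zRatio f z).re


lemma mem_eball_iff {z : ℂ} : z ∈ Metric.eball (0:ℂ) 1 ↔ z ∈ Metric.ball (0:ℂ) 1 := by
  rw [← ENNReal.coe_one, Metric.emetric_ball_nnreal]
  simp

lemma aux_series {a : ℕ → ℝ} (ha : ∀ n, 0 ≤ a n) {G : ℂ → ℂ}
    (h : ∀ z ∈ Metric.ball (0:ℂ) 1, HasSum (fun n : ℕ => (a n : ℂ) * z ^ n) (G z)) :
    AnalyticOnNhd ℂ G (Metric.ball 0 1) ∧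
      ∀ z ∈ Metric.ball (0:ℂ) 1,
        HasSum (fun n : ℕ => ((n : ℂ) + 1) * (a (n+1) : ℂ) * z ^ (n+1)) (z * deriv G z) := by
  set p := FormalMultilinearSeries.ofScalars ℂ (fun n => (a n : ℂ)) with hp
  have hpn : ∀ n, ‖p n‖ = a n := by
    intro n
    rw [hp, FormalMultilinearSeries.ofScalars_norm]
    simp [_root_.abs_of_nonneg (ha n)]
  have hrad : 1 ≤ p.radius := by
    apply ENNReal.le_of_forall_nnreal_lt
    intro r hr
    have hr1 : (r : ℝ) < 1 := by exact_mod_cast hr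
    have hmem : (((r : ℝ) : ℂ)) ∈ Metric.ball (0:ℂ) 1 := by
      simp only [Metric.mem_ball, dist_zero_right, Complex.norm_real, Real.norm_eq_abs]
      rw [_root_.abs_of_nonneg r.coe_nonneg]; exact hr1
    have hs : Summable (fun n => ‖(a n : ℂ) * ((r : ℝ) : ℂ) ^ n‖) :=
      summable_norm_iff.2 (h _ hmem).summable
    apply p.le_radius_of_summable_norm
    refine hs.congr fun n => ?_
    rw [norm_mul, norm_pow, hpn, Complex.norm_real, Real.norm_eq_abs,
      _root_.abs_of_nonneg (ha n), Complex.norm_real, Real.norm_eq_abs,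
      _root_.abs_of_nonneg r.coe_nonneg]
  have hball : HasFPowerSeriesOnBall G p 0 1 := by
    refine ⟨hrad, one_pos, ?_⟩
    intro y hy
    rw [zero_add]
    have := h y (mem_eball_iff.1 hy)
    refine this.congr_fun fun n => ?_
    rw [hp, FormalMultilinearSeries.ofScalars_apply_eq, smul_eq_mul]
  constructor
  · intro z hz
    exact hball.analyticAt_of_mem (mem_eball_iff.2 hz)
  · intro z hz
    have h1 := (hball.fderiv).hasSum (mem_eball_iff.2 hz)
    have h2 := h1.mapL (ContinuousLinearMap.apply ℂ ℂ z)
    have h3 : ∀ n : ℕ, (ContinuousLinearMap.apply ℂ ℂ z) (p.derivSeries n fun _ => z)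
        = ((n : ℂ) + 1) * (a (n+1) : ℂ) * z ^ (n+1) := by
      intro n
      rw [ContinuousLinearMap.apply_apply, p.derivSeries_apply_diag,
        hp, FormalMultilinearSeries.ofScalars_apply_eq, smul_eq_mul, nsmul_eq_mul]
      push_cast
      ring
    have h4 : (ContinuousLinearMap.apply ℂ ℂ z) (fderiv ℂ G (0 + z)) = z * deriv G z := by
      rw [zero_add, ContinuousLinearMap.apply_apply]
      have : fderiv ℂ G z z = fderiv ℂ G z (z • (1:ℂ)) := by
        rw [smul_eq_mul, mul_one]
      rw [this, (fderiv ℂ G z).map_smul, smul_eq_mul]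
      rfl
    rw [h4] at h2
    exact h2.congr_fun fun n => (h3 n).symm

theorem stmt0_key (μ α : ℝ) (hμ : 0 < μ) (hα₁ : -1 ≤ α) (hα₂ : α ≤ 1)
    (f : ℂ → ℂ) (b : ℕ → ℝ) (hb : ∀ n, 1 ≤ n → 0 ≤ b n)
    (hf : InSp f α)
    (hrepr : ∀ z ∈ unitDisk,
      HasSum (fun n : ℕ => (b (n + 1) : ℂ) * z ^ (n + 1)) (pw f μ z - 1)) :
    ∀ r : ℝ, 0 < r → r < 1 →
    ∃ S T : ℝ, 0 ≤ S ∧ 0 ≤ T ∧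
      HasSum (fun n : ℕ => b (n+1) * r^(n+1)) S ∧
      HasSum (fun n : ℕ => ((n:ℝ)+1) * b (n+1) * r^(n+1)) T ∧
      2 * T ≤ μ * (1 - α) * (1 + S) := by
  obtain ⟨⟨⟨hfa, hf0, hfd⟩, hinj⟩, hsp⟩ := hf
  have hopen : IsOpen unitDisk := Metric.isOpen_ball
  have h0mem : (0:ℂ) ∈ unitDisk := by simp [unitDisk]
  have hfne : ∀ z ∈ unitDisk, z ≠ 0 → f z ≠ 0 := fun z hz hz0 h =>
    hz0 (hinj hz h0mem (by rw [h, hf0]))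
  set u : ℂ → ℂ := dslope f 0 with hu
  have hu0 : u 0 = 1 := by rw [hu, dslope_same]; exact hfd
  have hfu : ∀ z : ℂ, f z = z * u z := by
    intro z
    rcases eq_or_ne z 0 with rfl | hz
    · simp [hf0]
    · rw [hu, dslope_of_ne _ hz, slope_def_field, hf0]
      field_simp
      ring
  have hua : AnalyticOnNhd ℂ u unitDisk := by
    have hd : DifferentiableOn ℂ u unitDisk :=
      (differentiableOn_dslope (hopen.mem_nhds h0mem)).2 hfa.differentiableOn
    exact hd.analyticOnNhd hopen
  have hune : ∀ z ∈ unitDisk, u z ≠ 0 := by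
    intro z hz
    rcases eq_or_ne z 0 with rfl | hz0
    · rw [hu0]; exact one_ne_zero
    · intro h
      exact hfne z hz hz0 (by rw [hfu z, h, mul_zero])
  set G : ℂ → ℂ := pw f μ with hG
  have hGu : ∀ z ∈ unitDisk, G z = ((u z)⁻¹) ^ (μ:ℂ) := by
    intro z hz
    rcases eq_or_ne z 0 with rfl | hz0
    · rw [hG]; simp [pw, hu0]
    · have hfz := hfne z hz hz0
      have hzf : z / f z = (u z)⁻¹ := by
        rw [hfu z, div_mul_cancel_left₀ hz0]
      rw [hG]; simp only [pw, if_neg hz0, hzf]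
  have hGne : ∀ z ∈ unitDisk, G z ≠ 0 := by
    intro z hz
    rw [hGu z hz]
    have hne : (u z)⁻¹ ≠ 0 := inv_ne_zero (hune z hz)
    rw [Complex.cpow_def_of_ne_zero hne]
    exact Complex.exp_ne_zero _
  set a : ℕ → ℝ := fun n => if n = 0 then 1 else b n with haa
  have ha0 : ∀ n, 0 ≤ a n := by
    intro n
    rw [haa]
    dsimp only
    split
    · norm_num
    · exact hb _ (by omega)
  have hsum : ∀ z ∈ Metric.ball (0:ℂ) 1, HasSum (fun n : ℕ => (a n : ℂ) * z ^ n) (G z) := by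
    intro z hz
    have h1 := hrepr z hz
    have h2 : HasSum (fun n : ℕ => (a (n+1) : ℂ) * z^(n+1)) (G z - 1) := by
      refine h1.congr_fun fun n => ?_
      simp [haa]
    have h3 := (hasSum_nat_add_iff (f := fun n : ℕ => (a n : ℂ) * z ^ n) 1).1 h2
    simpa [haa] using h3
  obtain ⟨hGan, hT⟩ := aux_series ha0 hsum
  have hG'an : AnalyticOnNhd ℂ (deriv G) unitDisk := hGan.deriv
  have hu'an : AnalyticOnNhd ℂ (deriv u) unitDisk := hua.deriv
  have hEq : Set.EqOn (fun z => deriv G z * u z) (fun z => -(μ:ℂ) * deriv u z * G z) unitDisk := by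
    apply AnalyticOnNhd.eqOn_of_preconnected_of_eventuallyEq (hG'an.mul hua)
      ((analyticOnNhd_const.mul hu'an).mul hGan)
      ((convex_ball (0:ℂ) 1).isPreconnected) h0mem
    have hub : ∀ᶠ z in nhds (0:ℂ), u z ∈ Metric.ball (1:ℂ) 1 := by
      have hc : ContinuousAt u 0 := (hua 0 h0mem).continuousAt
      exact hc.preimage_mem_nhds (by rw [hu0]; exact Metric.ball_mem_nhds _ one_pos)
    filter_upwards [hub, hopen.mem_nhds h0mem] with z hz1 hz2
    have huz : u z ≠ 0 := hune z hz2
    have hrepos : 0 < (u z).re := by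
      have h1 : ‖u z - 1‖ < 1 := by
        rw [Metric.mem_ball] at hz1
        simpa [Complex.dist_eq] using hz1
      have h2 : |(u z - 1).re| ≤ ‖u z - 1‖ := Complex.abs_re_le_norm _
      have h3 : (u z - 1).re = (u z).re - 1 := by simp
      rw [h3] at h2
      have h4 := abs_lt.1 (lt_of_le_of_lt h2 h1)
      linarith [h4.1]
    have hinv_slit : (u z)⁻¹ ∈ Complex.slitPlane := by
      rw [Complex.mem_slitPlane_iff]
      left
      rw [Complex.inv_re]
      have hns : 0 < Complex.normSq (u z) := Complex.normSq_pos.2 huz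
      positivity
    have hud : HasDerivAt u (deriv u z) z := (hua z hz2).differentiableAt.hasDerivAt
    have hinvd : HasDerivAt (fun w => (u w)⁻¹) (-deriv u z / (u z)^2) z := hud.inv huz
    have hcp : HasDerivAt (fun w => ((u w)⁻¹) ^ (μ:ℂ))
        ((μ:ℂ) * ((u z)⁻¹) ^ ((μ:ℂ) - 1) * (-deriv u z / (u z)^2)) z :=
      hinvd.cpow_const hinv_slit
    have hGd : deriv G z = (μ:ℂ) * ((u z)⁻¹) ^ ((μ:ℂ) - 1) * (-deriv u z / (u z)^2) := by
      have heq : G =ᶠ[nhds z] (fun w => ((u w)⁻¹) ^ (μ:ℂ)) := by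
        filter_upwards [hopen.mem_nhds hz2] with w hw using hGu w hw
      rw [heq.deriv_eq]
      exact hcp.deriv
    have hpow : ((u z)⁻¹) ^ ((μ:ℂ) - 1) * (u z)⁻¹ = ((u z)⁻¹) ^ (μ:ℂ) := by
      have h7 : ((u z)⁻¹) ^ ((μ:ℂ) - 1 + 1) = ((u z)⁻¹) ^ ((μ:ℂ) - 1) * ((u z)⁻¹) ^ (1:ℂ) :=
        Complex.cpow_add _ _ (inv_ne_zero huz)
      rw [sub_add_cancel, Complex.cpow_one] at h7
      exact h7.symm
    show deriv G z * u z = -(μ:ℂ) * deriv u z * G z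
    rw [hGd, hGu z hz2, ← hpow]
    field_simp
  -- the per-r estimate
  intro r hr0 hr1
  have hrc : ((r:ℝ):ℂ) ∈ unitDisk := by
    simp only [unitDisk, Metric.mem_ball, dist_zero_right, Complex.norm_real, Real.norm_eq_abs]
    rw [_root_.abs_of_nonneg hr0.le]; exact hr1
  have h1 := hrepr _ hrc
  have h1' : HasSum (fun n : ℕ => ((b (n+1) * r^(n+1) : ℝ) : ℂ)) (G ↑r - 1) := by
    refine h1.congr_fun fun n => ?_
    push_cast
    ring
  have hre1 := (Complex.hasSum_iff _ _).1 h1'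
  have hS : HasSum (fun n : ℕ => b (n+1) * r^(n+1)) ((G ↑r - 1).re) :=
    hre1.1.congr_fun fun n => (Complex.ofReal_re _).symm
  have hSim : (G ↑r - 1).im = 0 := by
    have h' : HasSum (fun _ : ℕ => (0:ℝ)) ((G ↑r - 1).im) :=
      hre1.2.congr_fun fun n => (Complex.ofReal_im _).symm
    exact h'.unique hasSum_zero
  set S := (G ↑r - 1).re with hSdef
  have hS0 : 0 ≤ S :=
    hS.nonneg fun n => mul_nonneg (hb _ (by omega)) (pow_nonneg hr0.le _)
  have hGr : G ↑r = ((1 + S : ℝ) : ℂ) := by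
    apply Complex.ext
    · have h5 : (G ↑r - 1).re = (G ↑r).re - 1 := by simp
      rw [Complex.ofReal_re, hSdef, h5]; ring
    · have h5 : (G ↑r - 1).im = (G ↑r).im := by simp
      rw [Complex.ofReal_im, ← h5, hSim]
  have hGrpos : (0:ℝ) < 1 + S := by linarith
  have h2 := hT ↑r hrc
  have h2' : HasSum (fun n : ℕ => ((((n:ℝ)+1) * b (n+1) * r^(n+1) : ℝ) : ℂ))
      ((↑r:ℂ) * deriv G ↑r) := by
    refine h2.congr_fun fun n => ?_
    have han : a (n+1) = b (n+1) := by simp [haa]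
    rw [han]
    push_cast
    ring
  have hre2 := (Complex.hasSum_iff _ _).1 h2'
  have hTs : HasSum (fun n : ℕ => ((n:ℝ)+1) * b (n+1) * r^(n+1)) (((↑r:ℂ) * deriv G ↑r).re) :=
    hre2.1.congr_fun fun n => (Complex.ofReal_re _).symm
  have hTim : ((↑r:ℂ) * deriv G ↑r).im = 0 := by
    have h' : HasSum (fun _ : ℕ => (0:ℝ)) (((↑r:ℂ) * deriv G ↑r).im) :=
      hre2.2.congr_fun fun n => (Complex.ofReal_im _).symm
    exact h'.unique hasSum_zero
  set T := (((↑r:ℂ)) * deriv G ↑r).re with hTdef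
  have hT0 : 0 ≤ T :=
    hTs.nonneg fun n => mul_nonneg (mul_nonneg (by positivity) (hb _ (by omega)))
      (pow_nonneg hr0.le _)
  have hrG' : (↑r:ℂ) * deriv G ↑r = ((T:ℝ):ℂ) := by
    apply Complex.ext
    · rw [Complex.ofReal_re, hTdef]
    · rw [Complex.ofReal_im, hTim]
  have hrne : ((r:ℝ):ℂ) ≠ 0 := by
    simp only [ne_eq, Complex.ofReal_eq_zero]
    exact hr0.ne'
  have huz := hune _ hrc
  have hGz := hGne _ hrc
  have hid : deriv G ↑r * u ↑r = -(μ:ℂ) * deriv u ↑r * G ↑r := hEq hrc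
  have hud : HasDerivAt u (deriv u ↑r) ↑r := (hua _ hrc).differentiableAt.hasDerivAt
  have hfd' : HasDerivAt f (u ↑r + ↑r * deriv u ↑r) ↑r := by
    have h' : HasDerivAt (fun w => w * u w) (1 * u ↑r + ↑r * deriv u ↑r) ↑r :=
      (hasDerivAt_id ((r:ℝ):ℂ)).mul hud
    rw [one_mul] at h'
    exact h'.congr_of_eventuallyEq (Filter.Eventually.of_forall fun w => hfu w)
  have hdf : deriv f ↑r = u ↑r + ↑r * deriv u ↑r := hfd'.deriv
  have hzr : zRatio f ↑r - 1 = ↑r * deriv u ↑r / u ↑r := by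
    rw [zRatio, if_neg hrne, hdf, hfu ↑r]
    field_simp
    ring
  set q : ℝ := T / (μ * (1 + S)) with hq
  have hμ0 : (μ:ℂ) ≠ 0 := by
    simp only [ne_eq, Complex.ofReal_eq_zero]
    exact hμ.ne'
  have hGS0 : ((1 + S : ℝ) : ℂ) ≠ 0 := by
    simp only [ne_eq, Complex.ofReal_eq_zero]
    exact hGrpos.ne'
  have hkey2 : (↑r:ℂ) * deriv u ↑r * ((μ:ℂ) * ((1 + S:ℝ):ℂ)) = ((-T:ℝ):ℂ) * u ↑r := by
    have hid' := hid
    rw [hGr] at hid'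
    push_cast at hid' hrG' ⊢
    linear_combination (↑r:ℂ) * hid' - u ↑r * hrG'
  have hzq : zRatio f ↑r - 1 = ((-q : ℝ) : ℂ) := by
    rw [hzr, hq]
    push_cast
    rw [← neg_div, div_eq_div_iff huz (by push_cast at hGS0 ⊢; exact mul_ne_zero hμ0 hGS0)]
    push_cast at hkey2
    linear_combination hkey2
  have hsp' := hsp _ hrc
  rw [hzq] at hsp'
  have hq0 : 0 ≤ q := by
    rw [hq]
    have : 0 < μ * (1 + S) := by positivity
    positivity
  have habs : ‖((-q:ℝ):ℂ)‖ = q := by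
    rw [Complex.norm_real, Real.norm_eq_abs, abs_neg, _root_.abs_of_nonneg hq0]
  have hzre : (zRatio f ↑r).re = 1 - q := by
    have h' : zRatio f ↑r = 1 + ((-q:ℝ):ℂ) := by rw [← hzq]; ring
    rw [h']
    simp [sub_eq_add_neg]
  rw [habs, hzre] at hsp'
  refine ⟨S, T, hS0, hT0, hS, hTs, ?_⟩
  have hden : 0 < μ * (1 + S) := by positivity
  have hqT : q * (μ * (1+S)) = T := by rw [hq]; field_simp
  have h2q : 0 ≤ 1 - α - 2*q := by linarith
  have h6 := mul_nonneg h2q hden.le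
  nlinarith [hqT]

/-- coefficient necessary condition for `𝒮_p(α)`. -/
theorem stmt0 (μ α : ℝ) (hμ : 0 < μ) (hα₁ : -1 ≤ α) (hα₂ : α ≤ 1)
    (f : ℂ → ℂ) (b : ℕ → ℝ) (hb : ∀ n, 1 ≤ n → 0 ≤ b n)
    (hf : InSp f α)
    (hrepr : ∀ z ∈ unitDisk,
      HasSum (fun n : ℕ => (b (n + 1) : ℂ) * z ^ (n + 1)) (pw f μ z - 1)) :
    Summable (fun n : ℕ => (2 * ((n : ℝ) + 1) - μ * (1 - α)) * b (n + 1)) ∧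
    ∑' n : ℕ, (2 * ((n : ℝ) + 1) - μ * (1 - α)) * b (n + 1) ≤ μ * (1 - α) := by
  have key := stmt0_key μ α hμ hα₁ hα₂ f b hb hf hrepr
  set c := μ * (1 - α) with hc
  set t : ℕ → ℝ := fun n => (2 * ((n : ℝ) + 1) - c) * b (n + 1) with ht
  set N := ⌈c⌉₊ with hN
  have htnonneg : ∀ n, N ≤ n → 0 ≤ t n := by
    intro n hn
    have h1 : c ≤ (n : ℝ) := le_trans (Nat.le_ceil c) (by exact_mod_cast hn)
    have h2 := hb (n + 1) (by omega)
    have h3 : 0 ≤ 2 * ((n : ℝ) + 1) - c := by linarith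
    exact mul_nonneg h3 h2
  have hpartial : ∀ M, N ≤ M → ∑ n ∈ Finset.range M, t n ≤ c := by
    intro M hM
    have hle : ∀ r : ℝ, 0 < r → r < 1 → ∑ n ∈ Finset.range M, t n * r ^ (n + 1) ≤ c := by
      intro r hr0 hr1
      obtain ⟨S, T, hS0, hT0, hS, hTs, hkey⟩ := key r hr0 hr1
      have hsum2 : HasSum (fun n => t n * r ^ (n + 1)) (2 * T - c * S) :=
        ((hTs.mul_left 2).sub (hS.mul_left c)).congr_fun fun n => by rw [ht]; ring
      have h3 : ∑ n ∈ Finset.range M, t n * r ^ (n + 1) ≤ 2 * T - c * S := by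
        rw [← hsum2.tsum_eq]
        refine Summable.sum_le_tsum _ (fun i hi => ?_) hsum2.summable
        have hMi : M ≤ i := le_of_not_gt fun h => hi (Finset.mem_range.2 h)
        exact mul_nonneg (htnonneg i (le_trans hM hMi)) (pow_nonneg hr0.le _)
      nlinarith [hkey, h3]
    have hFc : Continuous (fun r : ℝ => ∑ n ∈ Finset.range M, t n * r ^ (n + 1)) := by
      apply continuous_finset_sum
      intro i _
      exact continuous_const.mul (continuous_pow (i + 1))
    have htends : Filter.Tendsto (fun r : ℝ => ∑ n ∈ Finset.range M, t n * r ^ (n + 1))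
        (nhdsWithin 1 (Set.Iio 1)) (nhds (∑ n ∈ Finset.range M, t n * (1 : ℝ) ^ (n + 1))) :=
      (hFc.tendsto 1).mono_left nhdsWithin_le_nhds
    have hev : ∀ᶠ r in nhdsWithin (1 : ℝ) (Set.Iio 1),
        ∑ n ∈ Finset.range M, t n * r ^ (n + 1) ≤ c := by
      filter_upwards [Ioo_mem_nhdsLT_of_mem (show (1:ℝ) ∈ Set.Ioc 0 1 from ⟨one_pos, le_refl 1⟩)]
        with r hr
      exact hle r hr.1 hr.2
    have hlim := le_of_tendsto htends hev
    simpa using hlim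
  have hsmt : Summable t := by
    rw [← summable_nat_add_iff N]
    apply summable_of_sum_range_le (c := c - ∑ i ∈ Finset.range N, t i)
      (fun n => htnonneg _ (Nat.le_add_left _ _))
    intro M
    have h1 : ∑ i ∈ Finset.range (N + M), t i ≤ c := hpartial _ (Nat.le_add_right _ _)
    have h2 := Finset.sum_range_add t N M
    calc ∑ i ∈ Finset.range M, t (i + N)
        = ∑ i ∈ Finset.range M, t (N + i) :=
          Finset.sum_congr rfl fun i _ => by rw [Nat.add_comm]
      _ = ∑ i ∈ Finset.range (N + M), t i - ∑ i ∈ Finset.range N, t i := by rw [h2]; ring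
      _ ≤ c - ∑ i ∈ Finset.range N, t i := by linarith
  refine ⟨hsmt, ?_⟩
  apply le_of_tendsto hsmt.hasSum.tendsto_sum_nat
  filter_upwards [Filter.eventually_ge_atTop N] with M hM using hpartial M hM
end
end

section
/- Let μ > 0 and −1 ≤ α < 1. Suppose f ∈ 𝒜 with f(z) ≠ 0 for z ∈ 𝔻 ∖ {0} has the representation (z/f(z))^μ = 1 + Σ_{n=1}^∞ b_n z^n with complex coefficients b_n satisfying Σ_{n=1}^∞ (2n + μ(1−α)) |b_n| ≤ μ(1−α). Then f ∈ 𝒮_p(α). -/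
open Complex Metric Set

noncomputable section

lemma norm_exp_sub_one_le {w : ℂ} (hw : w.re ≤ 0) : ‖Complex.exp w - 1‖ ≤ ‖w‖ := by
  have hderiv : ∀ t ∈ Set.uIcc (0:ℝ) 1,
      HasDerivAt (fun s : ℝ => Complex.exp ((s : ℂ) * w)) (Complex.exp ((t : ℂ) * w) * w) t := by
    intro t _
    have h1 : HasDerivAt (fun s : ℝ => (s : ℂ) * w) w t := by
      simpa using (Complex.ofRealCLM.hasDerivAt (x := t)).mul_const w
    simpa using h1.cexp
  have hint : IntervalIntegrable (fun t : ℝ => Complex.exp ((t:ℂ) * w) * w)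
      MeasureTheory.volume 0 1 := by
    apply Continuous.intervalIntegrable
    continuity
  have key := intervalIntegral.integral_eq_sub_of_hasDerivAt hderiv hint
  have hb : ‖∫ t in (0:ℝ)..1, Complex.exp ((t:ℂ) * w) * w‖ ≤ ‖w‖ * |1 - (0:ℝ)| := by
    apply intervalIntegral.norm_integral_le_of_norm_le_const
    intro t ht
    rw [Set.uIoc_of_le (by norm_num : (0:ℝ) ≤ 1)] at ht
    rw [norm_mul]
    have h2 : ‖Complex.exp ((t:ℂ) * w)‖ ≤ 1 := by
      rw [Complex.norm_exp]
      have h3 : ((t:ℂ) * w).re = t * w.re := Complex.re_ofReal_mul _ _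
      rw [h3]
      exact Real.exp_le_one_iff.mpr (mul_nonpos_of_nonneg_of_nonpos ht.1.le hw)
    calc ‖Complex.exp ((t:ℂ) * w)‖ * ‖w‖ ≤ 1 * ‖w‖ :=
          mul_le_mul_of_nonneg_right h2 (norm_nonneg w)
      _ = ‖w‖ := one_mul _
  rw [key] at hb
  simpa using hb

set_option maxHeartbeats 1000000 in
/-- coefficient sufficient condition for `𝒮_p(α)`. -/
theorem stmt1 (μ α : ℝ) (hμ : 0 < μ) (hα₁ : -1 ≤ α) (hα₂ : α < 1)
    (f : ℂ → ℂ) (hfA : InA f) (hf0 : ∀ z ∈ unitDisk, z ≠ 0 → f z ≠ 0)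
    (b : ℕ → ℂ)
    (hrepr : ∀ z ∈ unitDisk,
      HasSum (fun n : ℕ => b (n + 1) * z ^ (n + 1)) (pw f μ z - 1))
    (hsum : Summable (fun n : ℕ =>
      (2 * ((n : ℝ) + 1) + μ * (1 - α)) * ‖b (n + 1)‖))
    (hineq : ∑' n : ℕ, (2 * ((n : ℝ) + 1) + μ * (1 - α)) * ‖b (n + 1)‖
      ≤ μ * (1 - α)) :
    InSp f α := by
  have hβpos : (0:ℝ) < 1 - α := by linarith
  have hβ2 : (1:ℝ) - α ≤ 2 := by linarith
  have hμβ : 0 < μ * (1 - α) := by positivity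
  -- basic summability
  have hcoef : ∀ n : ℕ, (1:ℝ) ≤ 2 * ((n : ℝ) + 1) + μ * (1 - α) := by
    intro n
    have : (0:ℝ) ≤ (n:ℝ) := n.cast_nonneg
    nlinarith
  have hSabs : Summable (fun n : ℕ => ‖b (n + 1)‖) := by
    apply Summable.of_nonneg_of_le (fun n => norm_nonneg _) (fun n => ?_) hsum
    exact le_mul_of_one_le_left (norm_nonneg _) (hcoef n)
  have hSA : Summable (fun n : ℕ => ((n : ℝ) + 1) * ‖b (n + 1)‖) := by
    apply Summable.of_nonneg_of_le
      (fun n => mul_nonneg (by positivity) (norm_nonneg _)) (fun n => ?_) hsum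
    apply mul_le_mul_of_nonneg_right _ (norm_nonneg _)
    nlinarith [(Nat.cast_nonneg n : (0:ℝ) ≤ (n:ℝ))]
  set t : ℝ := ∑' n : ℕ, ‖b (n + 1)‖ with ht_def
  set A : ℝ := ∑' n : ℕ, ((n : ℝ) + 1) * ‖b (n + 1)‖ with hA_def
  have ht0 : 0 ≤ t := tsum_nonneg fun n => norm_nonneg _
  have hA0 : 0 ≤ A := tsum_nonneg fun n => mul_nonneg (by positivity) (norm_nonneg _)
  have hkey : 2 * A + μ * (1 - α) * t ≤ μ * (1 - α) := by
    have s1 : Summable (fun n : ℕ => 2 * (((n : ℝ) + 1) * ‖b (n + 1)‖)) := hSA.mul_left 2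
    have s2 : Summable (fun n : ℕ => μ * (1 - α) * ‖b (n + 1)‖) := hSabs.mul_left _
    have heq : 2 * A + μ * (1 - α) * t
        = ∑' n : ℕ, (2 * (((n : ℝ) + 1) * ‖b (n + 1)‖) + μ * (1 - α) * ‖b (n + 1)‖) := by
      rw [Summable.tsum_add s1 s2, tsum_mul_left, tsum_mul_left]
    rw [heq]
    refine le_trans (le_of_eq (tsum_congr fun n => by ring)) hineq
  have ht1 : t ≤ 1 := by nlinarith
  have hA2 : 2 * A ≤ μ * (1 - α) * (1 - t) := by nlinarith
  have hAμ : A ≤ μ * (1 - t) := by nlinarith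
  -- the function G
  set G : ℂ → ℂ := fun z => 1 + ∑' n : ℕ, b (n + 1) * z ^ (n + 1) with hG_def
  set G' : ℂ → ℂ := fun z => ∑' n : ℕ, ((n + 1 : ℕ) : ℂ) * b (n + 1) * z ^ n with hG'_def
  have hsumnorm : ∀ z : ℂ, ‖z‖ ≤ 1 → Summable (fun n : ℕ => ‖b (n + 1) * z ^ (n + 1)‖) := by
    intro z hz
    apply Summable.of_nonneg_of_le (fun n => norm_nonneg _) (fun n => ?_) hSabs
    rw [norm_mul, norm_pow]
    exact mul_le_of_le_one_right (norm_nonneg _) (pow_le_one₀ (norm_nonneg _) hz)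
  have hG1 : ∀ z : ℂ, ‖z‖ ≤ 1 → ‖G z - 1‖ ≤ t * ‖z‖ := by
    intro z hz
    have he : G z - 1 = ∑' n : ℕ, b (n + 1) * z ^ (n + 1) := by
      simp [hG_def]
    rw [he]
    calc ‖∑' n : ℕ, b (n + 1) * z ^ (n + 1)‖ ≤ ∑' n : ℕ, ‖b (n + 1) * z ^ (n + 1)‖ :=
          norm_tsum_le_tsum_norm (hsumnorm z hz)
      _ ≤ ∑' n : ℕ, ‖b (n + 1)‖ * ‖z‖ := by
          apply Summable.tsum_le_tsum _ (hsumnorm z hz) (hSabs.mul_right _)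
          intro n
          rw [norm_mul, norm_pow]
          apply mul_le_mul_of_nonneg_left _ (norm_nonneg _)
          calc ‖z‖ ^ (n + 1) ≤ ‖z‖ ^ 1 := pow_le_pow_of_le_one (norm_nonneg _) hz (by omega)
            _ = ‖z‖ := pow_one _
      _ = t * ‖z‖ := tsum_mul_right
  have hG'sumnorm : ∀ z : ℂ, ‖z‖ ≤ 1 →
      Summable (fun n : ℕ => ‖((n + 1 : ℕ) : ℂ) * b (n + 1) * z ^ n‖) := by
    intro z hz
    apply Summable.of_nonneg_of_le (fun n => norm_nonneg _) (fun n => ?_) hSA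
    rw [norm_mul, norm_mul, norm_pow, Complex.norm_natCast]
    push_cast
    calc ((n:ℝ) + 1) * ‖b (n + 1)‖ * ‖z‖ ^ n ≤ ((n:ℝ) + 1) * ‖b (n + 1)‖ * 1 := by
          apply mul_le_mul_of_nonneg_left (pow_le_one₀ (norm_nonneg _) hz)
          positivity
      _ = ((n:ℝ) + 1) * ‖b (n + 1)‖ := mul_one _
  have hG'le : ∀ z : ℂ, ‖z‖ ≤ 1 → ‖G' z‖ ≤ A := by
    intro z hz
    calc ‖G' z‖ ≤ ∑' n : ℕ, ‖((n + 1 : ℕ) : ℂ) * b (n + 1) * z ^ n‖ :=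
          norm_tsum_le_tsum_norm (hG'sumnorm z hz)
      _ ≤ ∑' n : ℕ, ((n : ℝ) + 1) * ‖b (n + 1)‖ := by
          apply Summable.tsum_le_tsum _ (hG'sumnorm z hz) hSA
          intro n
          rw [norm_mul, norm_mul, norm_pow, Complex.norm_natCast]
          push_cast
          calc ((n:ℝ) + 1) * ‖b (n + 1)‖ * ‖z‖ ^ n ≤ ((n:ℝ) + 1) * ‖b (n + 1)‖ * 1 := by
                apply mul_le_mul_of_nonneg_left (pow_le_one₀ (norm_nonneg _) hz)
                positivity
            _ = ((n:ℝ) + 1) * ‖b (n + 1)‖ := mul_one _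
      _ = A := rfl
  -- derivative of G
  have hSA' : Summable (fun n : ℕ => ((n + 1 : ℕ) : ℝ) * ‖b (n + 1)‖) := by
    convert hSA using 2 with n
    push_cast
    ring
  have hGderiv : ∀ z ∈ ball (0:ℂ) 1, HasDerivAt G (G' z) z := by
    intro z hz
    have main := hasDerivAt_tsum_of_isPreconnected hSA' isOpen_ball
      (convex_ball (0:ℂ) 1).isPreconnected
      (g := fun n y => b (n + 1) * y ^ (n + 1))
      (g' := fun n y => ((n + 1 : ℕ) : ℂ) * b (n + 1) * y ^ n)
      (fun n y _ => by
        have := (hasDerivAt_pow (n + 1) y).const_mul (b (n + 1))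
        refine this.congr_deriv ?_
        push_cast
        ring)
      (fun n y hy => by
        rw [norm_mul, norm_mul, norm_pow, Complex.norm_natCast]
        have hy1 : ‖y‖ ≤ 1 := (mem_ball_zero_iff.1 hy).le
        calc ((n + 1 : ℕ) : ℝ) * ‖b (n + 1)‖ * ‖y‖ ^ n
            ≤ ((n + 1 : ℕ) : ℝ) * ‖b (n + 1)‖ * 1 := by
              apply mul_le_mul_of_nonneg_left (pow_le_one₀ (norm_nonneg _) hy1)
              positivity
          _ = ((n + 1 : ℕ) : ℝ) * ‖b (n + 1)‖ := mul_one _)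
      (mem_ball_self one_pos)
      (by simpa using summable_zero)
      hz
    exact main.const_add 1
  -- lower bounds on G
  have hGlb : ∀ z : ℂ, ‖z‖ ≤ 1 → 1 - t * ‖z‖ ≤ ‖G z‖ := by
    intro z hz
    have h1 := hG1 z hz
    have h2 : ‖(1:ℂ)‖ - ‖G z‖ ≤ ‖(1:ℂ) - G z‖ := norm_sub_norm_le _ _
    rw [norm_sub_rev] at h2
    simp only [norm_one] at h2
    linarith
  have hGre : ∀ z ∈ ball (0:ℂ) 1, 0 < (G z).re := by
    intro z hz
    have hz1 : ‖z‖ < 1 := mem_ball_zero_iff.1 hz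
    have h1 := hG1 z hz1.le
    have h2 : |(G z - 1).re| ≤ ‖G z - 1‖ := by
      exact Complex.abs_re_le_norm _
    have h3 : (G z).re = 1 + (G z - 1).re := by simp [Complex.sub_re]
    have h4 : t * ‖z‖ < 1 := by nlinarith [norm_nonneg z]
    have h5 := (abs_le.1 h2).1
    linarith
  have hGslit : ∀ z ∈ ball (0:ℂ) 1, G z ∈ Complex.slitPlane := by
    intro z hz
    exact Complex.mem_slitPlane_iff.2 (Or.inl (hGre z hz))
  have hGne : ∀ z ∈ ball (0:ℂ) 1, G z ≠ 0 := by
    intro z hz h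
    have := hGre z hz
    rw [h] at this
    simp at this
  have htz : ∀ z : ℂ, ‖z‖ < 1 → 0 < 1 - t * ‖z‖ := by
    intro z hz
    nlinarith [norm_nonneg z]
  -- the functions lf and U
  set lf : ℂ → ℂ := fun z => ((-μ⁻¹ : ℝ) : ℂ) * Complex.log (G z) with hlf_def
  set U : ℂ → ℂ := fun z => Complex.exp (lf z) with hU_def
  have hUne : ∀ z, U z ≠ 0 := fun z => Complex.exp_ne_zero _
  have hlfderiv : ∀ z ∈ ball (0:ℂ) 1,
      HasDerivAt lf (((-μ⁻¹ : ℝ) : ℂ) * ((G z)⁻¹ * G' z)) z := by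
    intro z hz
    have h1 : HasDerivAt (Complex.log ∘ G) ((G z)⁻¹ * G' z) z :=
      (Complex.hasDerivAt_log (hGslit z hz)).comp z (hGderiv z hz)
    exact h1.const_mul _
  have hUderiv : ∀ z ∈ ball (0:ℂ) 1,
      HasDerivAt U (U z * (((-μ⁻¹ : ℝ) : ℂ) * ((G z)⁻¹ * G' z))) z := by
    intro z hz
    exact (hlfderiv z hz).cexp
  have hG0 : G 0 = 1 := by
    have : ∀ n : ℕ, b (n + 1) * (0:ℂ) ^ (n + 1) = 0 := by intro n; simp
    simp [hG_def, tsum_congr this]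
  have hU0 : U 0 = 1 := by simp [hU_def, hlf_def, hG0]
  -- G equals pw on the disk
  have hG_eq : ∀ z ∈ ball (0:ℂ) 1, G z = pw f μ z := by
    intro z hz
    have h1 := (hrepr z hz).tsum_eq
    calc G z = 1 + ∑' n : ℕ, b (n + 1) * z ^ (n + 1) := rfl
      _ = 1 + (pw f μ z - 1) := by rw [h1]
      _ = pw f μ z := by ring
  -- |z * U z| = |f z|
  have hUabs : ∀ z ∈ ball (0:ℂ) 1, z ≠ 0 → ‖U z‖ = ‖f z‖ / ‖z‖ := by
    intro z hz hz0
    have hfz : f z ≠ 0 := hf0 z hz hz0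
    have hbase : z / f z ≠ 0 := div_ne_zero hz0 hfz
    have habsb : 0 < ‖z / f z‖ := norm_pos_iff.2 hbase
    have hGz : G z = (z / f z) ^ (μ : ℂ) := by
      rw [hG_eq z hz, pw, if_neg hz0]
    have hGabs : ‖G z‖ = ‖z / f z‖ ^ μ := by
      rw [hGz, Complex.norm_cpow_of_ne_zero hbase]
      simp
    have hlogG : (Complex.log (G z)).re = μ * Real.log ‖z / f z‖ := by
      rw [Complex.log_re, hGabs, Real.log_rpow habsb]
    have hUn : ‖U z‖ = Real.exp ((lf z).re) := by
      rw [hU_def, Complex.norm_exp]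
    rw [hUn, hlf_def]
    simp only [Complex.re_ofReal_mul, hlogG]
    have : -μ⁻¹ * (μ * Real.log ‖z / f z‖)
        = -Real.log ‖z / f z‖ := by
      field_simp
    rw [this, Real.exp_neg, Real.exp_log habsb]
    rw [norm_div, inv_div]
  -- maximum modulus: f = z * U z
  set F1 : ℂ → ℂ := dslope f 0 with hF1_def
  have hF1diff : DifferentiableOn ℂ F1 (ball (0:ℂ) 1) := by
    intro x hx
    by_cases hx0 : x = 0
    · subst hx0
      obtain ⟨p, hp⟩ := hfA.1 0 (mem_ball_self one_pos)
      exact hp.has_fpower_series_dslope_fslope.analyticAt.differentiableAt.differentiableWithinAt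
    · exact (differentiableWithinAt_dslope_of_ne hx0).2
        ((hfA.1 x hx).differentiableAt.differentiableWithinAt)
  have hF1_0 : F1 0 = 1 := by rw [hF1_def, dslope_same]; exact hfA.2.2
  have hF1_eq : ∀ x : ℂ, x ≠ 0 → F1 x = f x / x := by
    intro x hx0
    rw [hF1_def, dslope_of_ne _ hx0, slope_def_field, hfA.2.1]
    simp
  have hF1ne : ∀ x ∈ ball (0:ℂ) 1, F1 x ≠ 0 := by
    intro x hx
    by_cases hx0 : x = 0
    · subst hx0; rw [hF1_0]; exact one_ne_zero
    · rw [hF1_eq x hx0]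
      exact div_ne_zero (hf0 x hx hx0) hx0
  set v : ℂ → ℂ := fun x => U x / F1 x with hv_def
  have hvnorm : ∀ x ∈ ball (0:ℂ) 1, ‖v x‖ = 1 := by
    intro x hx
    by_cases hx0 : x = 0
    · subst hx0; simp [hv_def, hU0, hF1_0]
    · have hfx : f x ≠ 0 := hf0 x hx hx0
      rw [hv_def]
      simp only [norm_div]
      rw [hUabs x hx hx0, hF1_eq x hx0, norm_div]
      exact div_self (div_ne_zero (norm_ne_zero_iff.2 hfx) (norm_ne_zero_iff.2 hx0))
  have hvdiff : DifferentiableOn ℂ v (ball (0:ℂ) 1) := by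
    intro x hx
    exact ((hUderiv x hx).differentiableAt.differentiableWithinAt).div (hF1diff x hx)
      (hF1ne x hx)
  have hv0 : v 0 = 1 := by simp [hv_def, hU0, hF1_0]
  have hvconst : EqOn v (Function.const ℂ (v 0)) (ball (0:ℂ) 1) := by
    apply Complex.eqOn_of_isPreconnected_of_isMaxOn_norm
      (convex_ball (0:ℂ) 1).isPreconnected isOpen_ball hvdiff (mem_ball_self one_pos)
    apply isMaxOn_iff.mpr
    intro x hx
    simp only [Function.comp_apply]
    rw [hvnorm x hx, hvnorm 0 (mem_ball_self one_pos)]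
  have hfeq : ∀ x ∈ ball (0:ℂ) 1, f x = x * U x := by
    intro x hx
    by_cases hx0 : x = 0
    · subst hx0; simp [hfA.2.1]
    · have h1 : U x / F1 x = 1 := by
        have h3 := hvconst hx
        rw [hv0] at h3
        exact h3
      have h2 : U x = F1 x := by
        rw [div_eq_one_iff_eq (hF1ne x hx)] at h1
        exact h1
      rw [h2, hF1_eq x hx0]
      field_simp
  -- Injectivity
  have hInj : Set.InjOn f unitDisk := by
    intro z1 hz1' z2 hz2' hfz
    have hz1 : z1 ∈ ball (0:ℂ) 1 := hz1'
    have hz2 : z2 ∈ ball (0:ℂ) 1 := hz2'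
    by_cases h10 : z1 = 0
    · subst h10
      by_contra hne
      exact hf0 z2 hz2 (fun h => hne h.symm) (by rw [← hfz, hfA.2.1])
    by_cases h20 : z2 = 0
    · subst h20
      exact absurd (by rw [hfz, hfA.2.1]) (hf0 z1 hz1 h10)
    have e1 : z1 * U z1 = z2 * U z2 := by
      rw [← hfeq z1 hz1, ← hfeq z2 hz2]; exact hfz
    set w : ℂ := lf z2 - lf z1 with hw_def
    have hz1e : z1 = z2 * Complex.exp w := by
      have : z2 * Complex.exp w = z1 := by
        calc z2 * Complex.exp w = z2 * (U z2 / U z1) := by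
              rw [hw_def, hU_def, Complex.exp_sub]
          _ = (z2 * U z2) / U z1 := (mul_div_assoc _ _ _).symm
          _ = (z1 * U z1) / U z1 := by rw [e1]
          _ = z1 := mul_div_cancel_right₀ _ (hUne z1)
      exact this.symm
    set ρ : ℝ := max ‖z1‖ ‖z2‖ with hρ_def
    have hρ1 : ρ < 1 := max_lt (mem_ball_zero_iff.1 hz1) (mem_ball_zero_iff.1 hz2)
    have hρ0 : 0 ≤ ρ := le_trans (norm_nonneg z1) (le_max_left _ _)
    have hKsub : closedBall (0:ℂ) ρ ⊆ ball (0:ℂ) 1 := closedBall_subset_ball hρ1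
    have htρ : 0 < 1 - t * ρ := by nlinarith
    have hlip : ‖lf z2 - lf z1‖ ≤ (μ⁻¹ * (A / (1 - t * ρ))) * ‖z2 - z1‖ := by
      apply Convex.norm_image_sub_le_of_norm_hasDerivWithin_le
        (f' := fun x => ((-μ⁻¹ : ℝ) : ℂ) * ((G x)⁻¹ * G' x))
        (fun x hx => (hlfderiv x (hKsub hx)).hasDerivWithinAt)
        (fun x hx => ?_) (convex_closedBall (0:ℂ) ρ)
        (by rw [mem_closedBall_zero_iff]; exact le_max_left _ _)
        (by rw [mem_closedBall_zero_iff]; exact le_max_right _ _)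
      have hxρ : ‖x‖ ≤ ρ := mem_closedBall_zero_iff.1 hx
      have hx1 : ‖x‖ ≤ 1 := le_trans hxρ hρ1.le
      have hGx : 1 - t * ρ ≤ ‖G x‖ := by
        have := hGlb x hx1
        nlinarith
      have hGxpos : 0 < ‖G x‖ := lt_of_lt_of_le htρ hGx
      rw [norm_mul, norm_mul]
      have hc : ‖((-μ⁻¹ : ℝ) : ℂ)‖ = μ⁻¹ := by
        rw [Complex.norm_real, Real.norm_eq_abs, abs_neg, abs_of_pos (by positivity)]
      rw [hc, norm_inv]
      have h1 : ‖G x‖⁻¹ ≤ (1 - t * ρ)⁻¹ := by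
        apply inv_anti₀ htρ hGx
      have h2 : ‖G' x‖ ≤ A := hG'le x hx1
      calc μ⁻¹ * (‖G x‖⁻¹ * ‖G' x‖) ≤ μ⁻¹ * ((1 - t * ρ)⁻¹ * A) := by
            apply mul_le_mul_of_nonneg_left _ (by positivity)
            exact mul_le_mul h1 h2 (norm_nonneg _) (by positivity)
        _ = μ⁻¹ * (A / (1 - t * ρ)) := by rw [div_eq_inv_mul]
    by_contra hne
    have hz12pos : 0 < ‖z1 - z2‖ := by
      rw [norm_pos_iff]
      exact sub_ne_zero.2 hne
    have key : ‖z1 - z2‖ ≤ ρ * ‖w‖ := by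
      rcases le_total w.re 0 with hw | hw
      · have hd : z1 - z2 = z2 * (Complex.exp w - 1) := by rw [hz1e]; ring
        rw [hd, norm_mul]
        exact mul_le_mul (le_max_right _ _) (norm_exp_sub_one_le hw) (norm_nonneg _) hρ0
      · have hz2e : z2 = z1 * Complex.exp (-w) := by
          rw [hz1e, Complex.exp_neg, mul_assoc,
            mul_inv_cancel₀ (Complex.exp_ne_zero w), mul_one]
        have hd : z1 - z2 = -(z1 * (Complex.exp (-w) - 1)) := by rw [hz2e]; ring
        rw [hd, norm_neg, norm_mul]
        have hwre : (-w).re ≤ 0 := by rw [Complex.neg_re]; linarith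
        calc ‖z1‖ * ‖Complex.exp (-w) - 1‖ ≤ ρ * ‖-w‖ :=
              mul_le_mul (le_max_left _ _) (norm_exp_sub_one_le hwre) (norm_nonneg _) hρ0
          _ = ρ * ‖w‖ := by rw [norm_neg]
    have hchain : ‖z1 - z2‖ ≤ ρ * ((μ⁻¹ * (A / (1 - t * ρ))) * ‖z2 - z1‖) :=
      le_trans key (mul_le_mul_of_nonneg_left hlip hρ0)
    rw [norm_sub_rev z2 z1] at hchain
    have hCρ : ρ * (μ⁻¹ * (A / (1 - t * ρ))) < 1 := by
      have heq2 : ρ * (μ⁻¹ * (A / (1 - t * ρ))) = (ρ * A) / (μ * (1 - t * ρ)) := by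
        field_simp
      rw [heq2, div_lt_one (by positivity)]
      nlinarith [mul_le_mul_of_nonneg_left hAμ hρ0, mul_pos hμ (sub_pos.2 hρ1)]
    have hfin := mul_lt_mul_of_pos_right hCρ hz12pos
    rw [one_mul] at hfin
    nlinarith [hfin]
  -- the inequality
  refine ⟨⟨hfA, hInj⟩, ?_⟩
  intro z hz'
  have hz : z ∈ ball (0:ℂ) 1 := hz'
  by_cases hz0 : z = 0
  · subst hz0
    simp [zRatio]
    linarith
  have hz1 : ‖z‖ < 1 := mem_ball_zero_iff.1 hz
  have htr : 0 < 1 - t * ‖z‖ := htz z hz1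
  have hUd := hUderiv z hz
  have hfd : HasDerivAt f (U z + z * (U z * (((-μ⁻¹ : ℝ) : ℂ) * ((G z)⁻¹ * G' z)))) z := by
    have h1 : HasDerivAt (fun y => y * U y)
        (1 * U z + z * (U z * (((-μ⁻¹ : ℝ) : ℂ) * ((G z)⁻¹ * G' z)))) z :=
      (hasDerivAt_id z).mul hUd
    rw [one_mul] at h1
    apply h1.congr_of_eventuallyEq
    filter_upwards [isOpen_ball.mem_nhds hz] with y hy
    exact hfeq y hy
  have hderiv_eq : deriv f z = U z + z * (U z * (((-μ⁻¹ : ℝ) : ℂ) * ((G z)⁻¹ * G' z))) :=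
    hfd.deriv
  have hzr : zRatio f z - 1 = ((-μ⁻¹ : ℝ) : ℂ) * z * G' z / G z := by
    rw [zRatio, if_neg hz0, hderiv_eq, hfeq z hz]
    field_simp [hUne z, hGne z hz]
    ring
  rw [hzr]
  have hnorm_le : ‖((-μ⁻¹ : ℝ) : ℂ) * z * G' z / G z‖ ≤ μ⁻¹ * ‖z‖ * A / (1 - t * ‖z‖) := by
    rw [norm_div, norm_mul, norm_mul]
    have hc : ‖((-μ⁻¹ : ℝ) : ℂ)‖ = μ⁻¹ := by
      rw [Complex.norm_real, Real.norm_eq_abs, abs_neg, abs_of_pos (by positivity)]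
    rw [hc]
    apply div_le_div₀ (by positivity)
      (mul_le_mul_of_nonneg_left (hG'le z hz1.le) (by positivity))
      htr (hGlb z hz1.le)
  have h2S : μ⁻¹ * ‖z‖ * A / (1 - t * ‖z‖) ≤ (1 - α) / 2 := by
    rw [div_le_div_iff₀ htr (by norm_num)]
    have hr0 : 0 ≤ ‖z‖ := norm_nonneg z
    have h1 : μ⁻¹ * ‖z‖ * A * 2 = μ⁻¹ * (2 * A * ‖z‖) := by ring
    rw [h1]
    rw [inv_mul_le_iff₀ hμ] -- μ⁻¹ * X ≤ Y ↔ X ≤ μ * Y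
    nlinarith
  have habs1 : ‖((-μ⁻¹ : ℝ) : ℂ) * z * G' z / G z‖ ≤ (1 - α) / 2 := le_trans hnorm_le h2S
  have hre : -(‖((-μ⁻¹ : ℝ) : ℂ) * z * G' z / G z‖)
      ≤ (((-μ⁻¹ : ℝ) : ℂ) * z * G' z / G z).re := by
    have := Complex.abs_re_le_norm (((-μ⁻¹ : ℝ) : ℂ) * z * G' z / G z)
    linarith [(abs_le.1 this).1]
  have hrew : (zRatio f z).re = 1 + (((-μ⁻¹ : ℝ) : ℂ) * z * G' z / G z).re := by
    have : zRatio f z = 1 + ((-μ⁻¹ : ℝ) : ℂ) * z * G' z / G z := by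
      rw [← hzr]; ring
    rw [this, Complex.add_re, Complex.one_re]
  rw [hrew]
  linarith
end
end

section
/- Let 0 < μ ≤ 1. Suppose f ∈ 𝒮 has the representation (z/f(z))^μ = 1 + Σ_{n=1}^∞ b_n z^n with b_n ≥ 0 for all n, and satisfies Re( f'(z) (f(z)/z)^{μ−1} ) > 0 for all z ∈ 𝔻, where (f(z)/z)^{μ−1} is the principal power taken equal to 1 at z = 0. Then f ∈ 𝒰(1, μ). -/
open Complex Metric Set

noncomputable section

open Filter Topology

/-- summability of `(n+1) x^n` for `0 ≤ x < 1`. -/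
lemma aux_geom {x : ℝ} (h0 : 0 ≤ x) (h1 : x < 1) :
    Summable (fun n : ℕ => ((n : ℝ) + 1) * x ^ n) := by
  have h2 : Summable (fun n : ℕ => (n : ℝ) ^ 1 * x ^ n) :=
    summable_pow_mul_geometric_of_norm_lt_one 1
      (by rwa [Real.norm_eq_abs, _root_.abs_of_nonneg h0])
  have h3 : Summable (fun n : ℕ => x ^ n) := summable_geometric_of_lt_one h0 h1
  have h4 := h2.add h3
  refine h4.congr fun n => ?_
  ring

/-- If a principal power `w ^ μ` with `0 < μ ≤ 1` is a positive real, then `w` itself is a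
positive real. -/
lemma aux_cpow_pos {w : ℂ} (hw : w ≠ 0) {μ : ℝ} (hμ0 : 0 < μ) (hμ1 : μ ≤ 1) {t : ℝ}
    (ht : 0 < t) (h : w ^ (μ : ℂ) = (t : ℂ)) : w = (w.re : ℂ) ∧ 0 < w.re := by
  have harg : w.arg = 0 := by
    have hexp : Complex.exp (Complex.log w * (μ : ℂ)) = Complex.exp ((Real.log t : ℂ)) := by
      rw [← Complex.cpow_def_of_ne_zero hw, h, ← Complex.ofReal_exp, Real.exp_log ht]
    obtain ⟨n, hn⟩ := Complex.exp_eq_exp_iff_exists_int.1 hexp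
    have him : w.arg * μ = n * (2 * Real.pi) := by
      have h2 := congrArg Complex.im hn
      simpa [Complex.log_im, Complex.mul_im, Complex.add_im, Complex.ofReal_im,
        Complex.ofReal_re, Complex.mul_re, Complex.I_re, Complex.I_im] using h2
    have hn0 : n = 0 := by
      by_contra hne
      have h1 : (1 : ℝ) ≤ |(n : ℝ)| := by
        have : (1 : ℤ) ≤ |n| := Int.one_le_abs (by omega)
        calc (1 : ℝ) = ((1 : ℤ) : ℝ) := by norm_num
          _ ≤ ((|n| : ℤ) : ℝ) := by exact_mod_cast this
          _ = |(n : ℝ)| := by push_cast; ring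
      have h2 : |w.arg * μ| ≤ Real.pi := by
        rw [_root_.abs_mul, _root_.abs_of_nonneg hμ0.le]
        calc |w.arg| * μ ≤ Real.pi * 1 :=
              mul_le_mul (Complex.abs_arg_le_pi w) hμ1 hμ0.le Real.pi_pos.le
          _ = Real.pi := mul_one _
      rw [him, _root_.abs_mul] at h2
      have h3 : |(2 : ℝ) * Real.pi| = 2 * Real.pi := by
        rw [_root_.abs_of_nonneg]; positivity
      rw [h3] at h2
      nlinarith [Real.pi_pos]
    have h4 : w.arg * μ = 0 := by rw [him, hn0]; simp
    rcases mul_eq_zero.1 h4 with h5 | h5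
    · exact h5
    · exact absurd h5 hμ0.ne'
  obtain ⟨hre0, him0⟩ := Complex.arg_eq_zero_iff.1 harg
  have heq : w = (w.re : ℂ) := by
    apply Complex.ext
    · simp
    · simp [him0]
  refine ⟨heq, ?_⟩
  rcases hre0.lt_or_eq with h5 | h5
  · exact h5
  · exact absurd (by rw [heq, ← h5]; simp) hw

/-- Bazilevič-type condition implies `f ∈ 𝒰(1, μ)`. -/
theorem stmt6 (μ : ℝ) (hμ₀ : 0 < μ) (hμ₁ : μ ≤ 1)
    (f : ℂ → ℂ) (hf : InS f) (b : ℕ → ℝ) (hb : ∀ n, 1 ≤ n → 0 ≤ b n)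
    (hrepr : ∀ z ∈ unitDisk,
      HasSum (fun n : ℕ => (b (n + 1) : ℂ) * z ^ (n + 1)) (pw f μ z - 1))
    (hre : ∀ z ∈ unitDisk,
      0 < (deriv f z *
        (if z = 0 then 1 else (f z / z) ^ ((μ : ℂ) - 1))).re) :
    InU f 1 μ := by
  classical
  obtain ⟨⟨hfa, hf0, hf'0⟩, hfi⟩ := hf
  have hμC : (μ : ℂ) ≠ 0 := by exact_mod_cast hμ₀.ne'
  have hopen : IsOpen unitDisk := isOpen_ball
  have h0mem : (0 : ℂ) ∈ unitDisk := by simp [unitDisk]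
  have hconn : IsPreconnected unitDisk := (convex_ball (0 : ℂ) 1).isPreconnected
  have hmem : ∀ z : ℂ, z ∈ unitDisk ↔ ‖z‖ < 1 := fun z => by
    simp [unitDisk, Metric.mem_ball, dist_zero_right]
  have hfne : ∀ z ∈ unitDisk, z ≠ 0 → f z ≠ 0 := by
    intro z hz hz0 hfz
    exact hz0 (hfi hz h0mem (by rw [hfz, hf0]))
  -- the analytic function `g z = f z / z` (`= 1` at `0`)
  set g : ℂ → ℂ := dslope f 0 with hgdef
  have hg_at : ∀ z : ℂ, z ≠ 0 → g z = f z / z := by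
    intro z hz
    rw [hgdef, dslope_of_ne _ hz, slope_def_field]
    rw [hf0]
    ring
  have hg0 : g 0 = 1 := by rw [hgdef, dslope_same]; exact hf'0
  have hga : AnalyticOnNhd ℂ g unitDisk := by
    intro z hz
    rcases eq_or_ne z 0 with rfl | hz0
    · obtain ⟨p, hp⟩ := hfa 0 h0mem
      exact (hp.has_fpower_series_dslope_fslope).analyticAt
    · have h1 : AnalyticAt ℂ (fun w => f w / w) z := (hfa z hz).div analyticAt_id hz0
      exact h1.congr <| by
        filter_upwards [isOpen_ne.mem_nhds hz0] with w hw using (hg_at w hw).symm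
  have hgne : ∀ z ∈ unitDisk, g z ≠ 0 := by
    intro z hz
    rcases eq_or_ne z 0 with rfl | hz0
    · rw [hg0]; exact one_ne_zero
    · rw [hg_at z hz0]; exact div_ne_zero (hfne z hz hz0) hz0
  -- the analytic function `q z = z / f z` (`= 1` at `0`)
  set q : ℂ → ℂ := fun z => (g z)⁻¹ with hqdef
  have hq0 : q 0 = 1 := by rw [hqdef]; simp [hg0]
  have hq_at : ∀ z : ℂ, z ≠ 0 → q z = z / f z := by
    intro z hz
    rw [hqdef]
    simp only
    rw [hg_at z hz, inv_div]
  have hqa : AnalyticOnNhd ℂ q unitDisk := fun z hz => (hga z hz).inv (hgne z hz)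
  have hqne : ∀ z ∈ unitDisk, q z ≠ 0 := fun z hz => inv_ne_zero (hgne z hz)
  have hpw_q : ∀ z : ℂ, pw f μ z = q z ^ (μ : ℂ) := by
    intro z
    rcases eq_or_ne z 0 with rfl | hz0
    · rw [pw, if_pos rfl, hq0, Complex.one_cpow]
    · rw [pw, if_neg hz0, hq_at z hz0]
  have hbpos : ∀ n : ℕ, 0 ≤ b (n + 1) := fun n => hb (n + 1) (Nat.le_add_left 1 n)
  -- real summability of the coefficients against `t^(n+1)`
  have hrealsum : ∀ t : ℝ, 0 ≤ t → t < 1 →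
      HasSum (fun n : ℕ => b (n + 1) * t ^ (n + 1)) ((pw f μ (t : ℂ) - 1).re) := by
    intro t ht0 ht1
    have hmemt : (t : ℂ) ∈ unitDisk := by
      rw [hmem]
      rw [Complex.norm_real, Real.norm_eq_abs, _root_.abs_of_nonneg ht0]
      exact ht1
    have h1 := (hrepr (t : ℂ) hmemt).mapL Complex.reCLM
    have hterm : (fun n : ℕ => Complex.reCLM ((b (n + 1) : ℂ) * (t : ℂ) ^ (n + 1)))
        = fun n : ℕ => b (n + 1) * t ^ (n + 1) := by
      funext n
      rw [show ((b (n + 1) : ℂ) * (t : ℂ) ^ (n + 1)) = ((b (n + 1) * t ^ (n + 1) : ℝ) : ℂ) by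
        push_cast; ring]
      rw [Complex.reCLM_apply, Complex.ofReal_re]
    rwa [hterm] at h1
  have hSummB : ∀ t : ℝ, 0 ≤ t → t < 1 → Summable (fun n : ℕ => b (n + 1) * t ^ (n + 1)) :=
    fun t ht0 ht1 => (hrealsum t ht0 ht1).summable
  -- summability of the differentiated series
  have hSummD : ∀ r : ℝ, 0 ≤ r → r < 1 →
      Summable (fun n : ℕ => ((n : ℝ) + 1) * b (n + 1) * r ^ n) := by
    intro r hr0 hr1
    have ht0 : 0 < (1 + r) / 2 := by linarith
    have hrt : r < (1 + r) / 2 := by linarith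
    have ht1 : (1 + r) / 2 < 1 := by linarith
    set t : ℝ := (1 + r) / 2
    set x : ℝ := r / t with hxdef
    have hx0 : 0 ≤ x := div_nonneg hr0 ht0.le
    have hx1 : x < 1 := (div_lt_one ht0).2 hrt
    have hM := hSummB t ht0.le ht1
    set M : ℝ := ∑' n : ℕ, b (n + 1) * t ^ (n + 1) with hMdef
    have hMle : ∀ n : ℕ, b (n + 1) * t ^ (n + 1) ≤ M := fun n =>
      Summable.le_tsum hM n fun m _ => mul_nonneg (hbpos m) (pow_nonneg ht0.le _)
    have hrxt : r = x * t := by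
      rw [hxdef]; field_simp
    have key : ∀ n : ℕ, b (n + 1) * r ^ n ≤ M / t * x ^ n := by
      intro n
      have h1 : b (n + 1) * t ^ n ≤ M / t := by
        rw [le_div_iff₀ ht0]
        calc b (n + 1) * t ^ n * t = b (n + 1) * t ^ (n + 1) := by ring
          _ ≤ M := hMle n
      calc b (n + 1) * r ^ n = b (n + 1) * t ^ n * x ^ n := by
            rw [hrxt, mul_pow]; ring
        _ ≤ M / t * x ^ n := mul_le_mul_of_nonneg_right h1 (pow_nonneg hx0 n)
    refine Summable.of_nonneg_of_le (fun n => ?_) (fun n => ?_)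
      ((aux_geom hx0 hx1).mul_left (M / t))
    · have h2 : (0 : ℝ) ≤ (n : ℝ) + 1 := by positivity
      exact mul_nonneg (mul_nonneg h2 (hbpos n)) (pow_nonneg hr0 n)
    · calc ((n : ℝ) + 1) * b (n + 1) * r ^ n = ((n : ℝ) + 1) * (b (n + 1) * r ^ n) := by ring
        _ ≤ ((n : ℝ) + 1) * (M / t * x ^ n) :=
            mul_le_mul_of_nonneg_left (key n) (by positivity)
        _ = M / t * (((n : ℝ) + 1) * x ^ n) := by ring
  -- the sum function and its term-wise derivative
  set S : ℂ → ℂ := fun z => ∑' n : ℕ, (b (n + 1) : ℂ) * z ^ (n + 1) with hSdef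
  set T : ℂ → ℂ := fun z => ∑' n : ℕ, ((n : ℂ) + 1) * (b (n + 1) : ℂ) * z ^ n with hTdef
  have hnorm : ∀ (z : ℂ) (n : ℕ),
      ‖((n : ℂ) + 1) * (b (n + 1) : ℂ) * z ^ n‖ = ((n : ℝ) + 1) * b (n + 1) * ‖z‖ ^ n := by
    intro z n
    rw [norm_mul, norm_mul, norm_pow]
    congr 1
    congr 1
    · rw [show ((n : ℂ) + 1) = (((n : ℝ) + 1 : ℝ) : ℂ) by push_cast; ring]
      rw [Complex.norm_real, Real.norm_eq_abs, _root_.abs_of_nonneg (by positivity)]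
    · rw [Complex.norm_real, Real.norm_eq_abs, _root_.abs_of_nonneg (hbpos n)]
  have hSummT : ∀ z : ℂ, ‖z‖ < 1 →
      Summable (fun n : ℕ => ((n : ℂ) + 1) * (b (n + 1) : ℂ) * z ^ n) := by
    intro z hz
    apply Summable.of_norm
    have := hSummD ‖z‖ (norm_nonneg z) hz
    exact this.congr fun n => (hnorm z n).symm
  have hSderiv : ∀ z : ℂ, ‖z‖ < 1 → HasDerivAt S (T z) z := by
    intro z hz
    have hz0 : (0 : ℝ) ≤ ‖z‖ := norm_nonneg z
    have htpos : 0 < (1 + ‖z‖) / 2 := by linarith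
    have hzt : ‖z‖ < (1 + ‖z‖) / 2 := by linarith
    have ht1 : (1 + ‖z‖) / 2 < 1 := by linarith
    set t : ℝ := (1 + ‖z‖) / 2
    have hu : Summable (fun n : ℕ => ((n : ℝ) + 1) * b (n + 1) * t ^ n) :=
      hSummD t htpos.le ht1
    have h := hasDerivAt_tsum_of_isPreconnected (u := fun n : ℕ => ((n : ℝ) + 1) * b (n + 1) * t ^ n)
      (g := fun n w => (b (n + 1) : ℂ) * w ^ (n + 1))
      (g' := fun n y => ((n : ℂ) + 1) * (b (n + 1) : ℂ) * y ^ n)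
      (t := Metric.ball (0 : ℂ) t) (y₀ := 0) (y := z)
      hu isOpen_ball ((convex_ball (0 : ℂ) t).isPreconnected)
      (fun n y _ => ?_) (fun n y hy => ?_)
      (by simpa [Metric.mem_ball, dist_zero_right] using htpos)
      (by
        apply summable_zero.congr
        intro n
        simp)
      (by simpa [Metric.mem_ball, dist_zero_right] using hzt)
    · exact h
    · have h1 := (hasDerivAt_pow (n + 1) y).const_mul ((b (n + 1) : ℂ))
      exact h1.congr_deriv (by push_cast [Nat.add_sub_cancel]; ring)
    · rw [hnorm]
      have hyt : ‖y‖ ≤ t := by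
        rw [Metric.mem_ball, dist_zero_right] at hy
        exact hy.le
      have h2 : ‖y‖ ^ n ≤ t ^ n := pow_le_pow_left₀ (norm_nonneg y) hyt n
      exact mul_le_mul_of_nonneg_left h2 (mul_nonneg (by positivity) (hbpos n))
  have hSa : AnalyticOnNhd ℂ S unitDisk := by
    have hd : DifferentiableOn ℂ S unitDisk := fun z hz =>
      ((hSderiv z ((hmem z).1 hz)).differentiableAt).differentiableWithinAt
    exact hd.analyticOnNhd hopen
  have hTa : AnalyticOnNhd ℂ T unitDisk := by
    intro z hz
    apply (hSa.deriv z hz).congr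
    filter_upwards [hopen.mem_nhds hz] with w hw using (hSderiv w ((hmem w).1 hw)).deriv
  have hpwS : ∀ z ∈ unitDisk, pw f μ z = 1 + S z := by
    intro z hz
    have h1 := (hrepr z hz).tsum_eq
    rw [hSdef]
    simp only
    rw [h1]
    ring
  have hS0 : S 0 = 0 := by
    rw [hSdef]
    simp only
    convert tsum_zero with n
    simp
  -- the key algebraic identity for `q`
  have hkey : ∀ z ∈ unitDisk, z ≠ 0 → q z ^ 2 * deriv f z = q z - z * deriv q z := by
    intro z hz hz0
    have hfz := hfne z hz hz0
    have hfd : DifferentiableAt ℂ f z := (hfa z hz).differentiableAt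
    have hqe : q =ᶠ[𝓝 z] fun w => w / f w := by
      filter_upwards [isOpen_ne.mem_nhds hz0] with w hw using hq_at w hw
    have hdq : deriv q z = (f z - z * deriv f z) / f z ^ 2 := by
      rw [hqe.deriv_eq, deriv_fun_div differentiableAt_fun_id hfd hfz]
      simp
    rw [hdq, hq_at z hz0]
    field_simp
    ring
  -- the two analytic sides of the main identity
  set L : ℂ → ℂ := fun z => (μ : ℂ) * (deriv f z * (q z * (1 + S z))) with hLdef
  set R : ℂ → ℂ := fun z => (μ : ℂ) * (1 + S z) - z * T z with hRdef
  have hLa : AnalyticOnNhd ℂ L unitDisk := fun z hz =>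
    analyticAt_const.mul ((hfa.deriv z hz).mul
      ((hqa z hz).mul (analyticAt_const.add (hSa z hz))))
  have hRa : AnalyticOnNhd ℂ R unitDisk := fun z hz =>
    (analyticAt_const.mul (analyticAt_const.add (hSa z hz))).sub
      (analyticAt_id.mul (hTa z hz))
  -- the main identity near `0`
  have hfreq : ∃ᶠ z in 𝓝[≠] (0 : ℂ), L z = R z := by
    apply Filter.Eventually.frequently
    have hc : ContinuousAt q 0 := (hqa 0 h0mem).continuousAt
    have hcre : ContinuousAt (fun z => (q z).re) 0 :=
      Complex.continuous_re.continuousAt.comp hc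
    have h2 : (0 : ℝ) < (q 0).re := by rw [hq0]; norm_num
    have h1 : ∀ᶠ z in 𝓝 (0 : ℂ), 0 < (q z).re := hcre.eventually (lt_mem_nhds h2)
    have hev : ∀ᶠ z in 𝓝 (0 : ℂ), z ∈ unitDisk ∧ 0 < (q z).re :=
      (hopen.eventually_mem h0mem).and h1
    have hev' : ∀ᶠ z in 𝓝[≠] (0 : ℂ), z ∈ unitDisk ∧ 0 < (q z).re :=
      nhdsWithin_le_nhds hev
    filter_upwards [hev', eventually_mem_nhdsWithin] with z hz hz0'
    obtain ⟨hzd, hqre⟩ := hz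
    have hz0 : z ≠ 0 := hz0'
    have hqz := hqne z hzd
    have hfz := hfne z hzd hz0
    have hslit : q z ∈ Complex.slitPlane := Or.inl hqre
    have hqd : HasDerivAt q (deriv q z) z := (hqa z hzd).differentiableAt.hasDerivAt
    have hP : HasDerivAt (fun w => q w ^ (μ : ℂ))
        ((μ : ℂ) * q z ^ ((μ : ℂ) - 1) * deriv q z) z := hqd.cpow_const hslit
    have hPS : (fun w => q w ^ (μ : ℂ)) =ᶠ[𝓝 z] fun w => 1 + S w := by
      filter_upwards [hopen.mem_nhds hzd] with w hw
      rw [← hpw_q w, hpwS w hw]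
    have hP2 : HasDerivAt (fun w => 1 + S w)
        ((μ : ℂ) * q z ^ ((μ : ℂ) - 1) * deriv q z) z :=
      hP.congr_of_eventuallyEq hPS.symm
    have hP3 : HasDerivAt (fun w => 1 + S w) (T z) z :=
      (hSderiv z ((hmem z).1 hzd)).const_add 1
    have hTz : T z = (μ : ℂ) * q z ^ ((μ : ℂ) - 1) * deriv q z := by
      rw [← hP3.deriv]
      exact hP2.deriv
    have e1 : q z ^ ((μ : ℂ) - 1) * q z = q z ^ (μ : ℂ) := by
      rw [Complex.cpow_sub _ _ hqz, Complex.cpow_one]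
      field_simp
    have hSz : 1 + S z = q z ^ (μ : ℂ) := by rw [← hpwS z hzd, hpw_q]
    have hk := hkey z hzd hz0
    rw [hLdef, hRdef]
    simp only
    rw [hSz, hTz]
    calc (μ : ℂ) * (deriv f z * (q z * q z ^ (μ : ℂ)))
        = (μ : ℂ) * q z ^ ((μ : ℂ) - 1) * (q z ^ 2 * deriv f z) := by
          rw [← e1]; ring
      _ = (μ : ℂ) * q z ^ ((μ : ℂ) - 1) * (q z - z * deriv q z) := by rw [hk]
      _ = (μ : ℂ) * (q z ^ ((μ : ℂ) - 1) * q z)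
            - z * ((μ : ℂ) * q z ^ ((μ : ℂ) - 1) * deriv q z) := by ring
      _ = (μ : ℂ) * q z ^ (μ : ℂ) - z * ((μ : ℂ) * q z ^ ((μ : ℂ) - 1) * deriv q z) := by
          rw [e1]
  have hLR : EqOn L R unitDisk :=
    hLa.eqOn_of_preconnected_of_frequently_eq hRa hconn h0mem hfreq
  -- the coefficient expansion of `f' · q · (1 + S)`
  have hG : ∀ z ∈ unitDisk,
      HasSum (fun n : ℕ => (((1 - ((n : ℝ) + 1) / μ) * b (n + 1) : ℝ) : ℂ) * z ^ (n + 1))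
        (deriv f z * (q z * (1 + S z)) - 1) := by
    intro z hz
    have h0 : pw f μ z - 1 = S z := by rw [hpwS z hz]; ring
    have h1 : HasSum (fun n : ℕ => (μ : ℂ) * ((b (n + 1) : ℂ) * z ^ (n + 1)))
        ((μ : ℂ) * S z) := by
      apply HasSum.mul_left
      have h2 := hrepr z hz
      rwa [h0] at h2
    have hTsum : HasSum (fun n : ℕ => ((n : ℂ) + 1) * (b (n + 1) : ℂ) * z ^ n) (T z) :=
      (hSummT z ((hmem z).1 hz)).hasSum
    have h2 : HasSum (fun n : ℕ => z * (((n : ℂ) + 1) * (b (n + 1) : ℂ) * z ^ n))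
        (z * T z) := hTsum.mul_left z
    have h3 := h1.sub h2
    have hv : (μ : ℂ) * S z - z * T z
        = (μ : ℂ) * (deriv f z * (q z * (1 + S z))) - (μ : ℂ) := by
      have h4 := hLR hz
      rw [hLdef, hRdef] at h4
      simp only at h4
      linear_combination -h4
    rw [hv] at h3
    have h5 := h3.div_const (μ : ℂ)
    have hterm : (fun n : ℕ => ((μ : ℂ) * ((b (n + 1) : ℂ) * z ^ (n + 1))
          - z * (((n : ℂ) + 1) * (b (n + 1) : ℂ) * z ^ n)) / (μ : ℂ))
        = fun n : ℕ => (((1 - ((n : ℝ) + 1) / μ) * b (n + 1) : ℝ) : ℂ) * z ^ (n + 1) := by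
      funext n
      push_cast
      field_simp
      ring
    have hval : ((μ : ℂ) * (deriv f z * (q z * (1 + S z))) - (μ : ℂ)) / (μ : ℂ)
        = deriv f z * (q z * (1 + S z)) - 1 := by
      field_simp
    rwa [hterm, hval] at h5
  -- identification with the `𝒰` expression
  have hGeq : ∀ z ∈ unitDisk,
      deriv f z * (q z * (1 + S z))
        = deriv f z * (if z = 0 then 1 else (z / f z) ^ ((μ : ℂ) + 1)) := by
    intro z hz
    rcases eq_or_ne z 0 with rfl | hz0
    · rw [if_pos rfl, hq0, hS0]
      norm_num
    · rw [if_neg hz0]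
      have hfz := hfne z hz hz0
      have hdz : z / f z ≠ 0 := div_ne_zero hz0 hfz
      have h1 : 1 + S z = (z / f z) ^ (μ : ℂ) := by
        rw [← hpwS z hz, hpw_q, hq_at z hz0]
      rw [h1, hq_at z hz0, Complex.cpow_add _ _ hdz, Complex.cpow_one]
      ring
  -- nonnegativity of the modified coefficients
  have hd_nonneg : ∀ n : ℕ, 0 ≤ (((n : ℝ) + 1) / μ - 1) * b (n + 1) := by
    intro n
    apply mul_nonneg _ (hbpos n)
    have h1 : (0 : ℝ) ≤ (n : ℝ) := Nat.cast_nonneg n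
    have h2 : (1 : ℝ) ≤ ((n : ℝ) + 1) / μ := by
      rw [le_div_iff₀ hμ₀]
      nlinarith
    linarith
  -- the real expansion at real points
  have hrptsum : ∀ r : ℝ, 0 < r → r < 1 →
      HasSum (fun n : ℕ => (((n : ℝ) + 1) / μ - 1) * b (n + 1) * r ^ (n + 1))
        (1 - (deriv f (r : ℂ) * (q (r : ℂ) * (1 + S (r : ℂ)))).re) := by
    intro r hr0 hr1
    have hmemr : (r : ℂ) ∈ unitDisk := by
      rw [hmem, Complex.norm_real, Real.norm_eq_abs, _root_.abs_of_pos hr0]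
      exact hr1
    have h1 := (hG (r : ℂ) hmemr).mapL Complex.reCLM
    have hterm : (fun n : ℕ => Complex.reCLM
          ((((1 - ((n : ℝ) + 1) / μ) * b (n + 1) : ℝ) : ℂ) * (r : ℂ) ^ (n + 1)))
        = fun n : ℕ => (1 - ((n : ℝ) + 1) / μ) * b (n + 1) * r ^ (n + 1) := by
      funext n
      rw [show ((((1 - ((n : ℝ) + 1) / μ) * b (n + 1) : ℝ) : ℂ) * (r : ℂ) ^ (n + 1))
          = (((1 - ((n : ℝ) + 1) / μ) * b (n + 1) * r ^ (n + 1) : ℝ) : ℂ) by push_cast; ring]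
      rw [Complex.reCLM_apply, Complex.ofReal_re]
    rw [hterm] at h1
    have h2 := h1.neg
    have hval : -((Complex.reCLM) (deriv f (r : ℂ) * (q (r : ℂ) * (1 + S (r : ℂ))) - 1))
        = 1 - (deriv f (r : ℂ) * (q (r : ℂ) * (1 + S (r : ℂ)))).re := by
      simp [Complex.sub_re]
    rw [hval] at h2
    have hterm2 : (fun n : ℕ => (((n : ℝ) + 1) / μ - 1) * b (n + 1) * r ^ (n + 1))
        = fun n : ℕ => -((1 - ((n : ℝ) + 1) / μ) * b (n + 1) * r ^ (n + 1)) := by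
      funext n; ring
    rw [hterm2]
    exact h2
  -- positivity of the real part at real points, using `hre`
  have hre_pos : ∀ r : ℝ, 0 < r → r < 1 →
      0 < (deriv f (r : ℂ) * (q (r : ℂ) * (1 + S (r : ℂ)))).re := by
    intro r hr0 hr1
    have hmemr : (r : ℂ) ∈ unitDisk := by
      rw [hmem, Complex.norm_real, Real.norm_eq_abs, _root_.abs_of_pos hr0]
      exact hr1
    have hrC : (r : ℂ) ≠ 0 := by
      simp only [ne_eq, Complex.ofReal_eq_zero]
      exact hr0.ne'
    have hfr := hfne (r : ℂ) hmemr hrC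
    have hSreal := hrealsum r hr0.le hr1
    set s : ℝ := (pw f μ (r : ℂ) - 1).re with hsdef
    have hs0 : 0 ≤ s :=
      hSreal.nonneg fun n => mul_nonneg (hbpos n) (pow_nonneg hr0.le _)
    have hpw_real : pw f μ (r : ℂ) = ((1 + s : ℝ) : ℂ) := by
      have h1 : HasSum (fun n : ℕ => ((b (n + 1) * r ^ (n + 1) : ℝ) : ℂ)) ((s : ℂ)) :=
        hSreal.mapL Complex.ofRealCLM
      have h2 := hrepr (r : ℂ) hmemr
      have hterm : (fun n : ℕ => ((b (n + 1) * r ^ (n + 1) : ℝ) : ℂ))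
          = fun n : ℕ => (b (n + 1) : ℂ) * (r : ℂ) ^ (n + 1) := by
        funext n; push_cast; ring
      rw [hterm] at h1
      have h3 : pw f μ (r : ℂ) - 1 = (s : ℂ) := h2.unique h1
      push_cast
      linear_combination h3
    have h1s : (0 : ℝ) < 1 + s := by linarith
    set w : ℂ := (r : ℂ) / f (r : ℂ) with hwdef
    have hw : w ≠ 0 := div_ne_zero hrC hfr
    have hqr : q (r : ℂ) = w := hq_at _ hrC
    have hpowq : w ^ (μ : ℂ) = ((1 + s : ℝ) : ℂ) := by
      rw [← hqr, ← hpw_q, hpw_real]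
    obtain ⟨hwre, hwpos⟩ := aux_cpow_pos hw hμ₀ hμ₁ h1s hpowq
    have harg : w.arg ≠ Real.pi := by
      rw [hwre, Complex.arg_ofReal_of_nonneg hwpos.le]
      exact fun hpi => Real.pi_ne_zero hpi.symm
    have hv : f (r : ℂ) / (r : ℂ) = w⁻¹ := by
      rw [hwdef, inv_div]
    have hcomp : (f (r : ℂ) / (r : ℂ)) ^ ((μ : ℂ) - 1) = (((1 + s : ℝ) : ℂ))⁻¹ * w := by
      rw [hv, Complex.cpow_sub _ _ (inv_ne_zero hw), Complex.cpow_one,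
        Complex.inv_cpow _ _ harg, hpowq, division_def, inv_inv]
    have h1S : 1 + S (r : ℂ) = ((1 + s : ℝ) : ℂ) := by
      rw [← hpwS _ hmemr, hpw_real]
    have hne1s : (((1 + s : ℝ) : ℂ)) ≠ 0 := by
      simp only [ne_eq, Complex.ofReal_eq_zero]
      exact h1s.ne'
    have hGr : deriv f (r : ℂ) * (q (r : ℂ) * (1 + S (r : ℂ)))
        = (deriv f (r : ℂ) * ((f (r : ℂ) / (r : ℂ)) ^ ((μ : ℂ) - 1)))
          * ((((1 + s) ^ 2 : ℝ)) : ℂ) := by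
      have hne1s' : (1 : ℂ) + (s : ℂ) ≠ 0 := by exact_mod_cast hne1s
      rw [hcomp, hqr, h1S]
      push_cast
      field_simp [hne1s']
    have hre_mul : ∀ (a : ℂ) (x : ℝ), (a * (x : ℂ)).re = a.re * x := by
      intro a x
      simp [Complex.mul_re]
    rw [hGr, hre_mul]
    have h2 := hre (r : ℂ) hmemr
    rw [if_neg hrC] at h2
    exact mul_pos h2 (by positivity)
  -- partial sums of the modified coefficients are bounded by 1
  have hpartial : ∀ N : ℕ,
      ∑ n ∈ Finset.range N, (((n : ℝ) + 1) / μ - 1) * b (n + 1) ≤ 1 := by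
    intro N
    have hlim : Filter.Tendsto
        (fun r : ℝ => ∑ n ∈ Finset.range N, (((n : ℝ) + 1) / μ - 1) * b (n + 1) * r ^ (n + 1))
        (𝓝[Set.Ioo (0 : ℝ) 1] 1)
        (𝓝 (∑ n ∈ Finset.range N, (((n : ℝ) + 1) / μ - 1) * b (n + 1))) := by
      have hc : Continuous
          (fun r : ℝ => ∑ n ∈ Finset.range N, (((n : ℝ) + 1) / μ - 1) * b (n + 1) * r ^ (n + 1)) := by
        apply continuous_finset_sum
        intro i _
        exact continuous_const.mul (continuous_pow (i + 1))
      have h1 := hc.tendsto 1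
      simp only [one_pow, mul_one] at h1
      exact h1.mono_left nhdsWithin_le_nhds
    have hne : (𝓝[Set.Ioo (0 : ℝ) 1] (1 : ℝ)).NeBot :=
      right_nhdsWithin_Ioo_neBot (by norm_num)
    apply le_of_tendsto hlim
    filter_upwards [self_mem_nhdsWithin] with r hr
    obtain ⟨hr0, hr1⟩ := hr
    have hsum := hrptsum r hr0 hr1
    have hposG := hre_pos r hr0 hr1
    calc ∑ n ∈ Finset.range N, (((n : ℝ) + 1) / μ - 1) * b (n + 1) * r ^ (n + 1)
        ≤ ∑' n : ℕ, (((n : ℝ) + 1) / μ - 1) * b (n + 1) * r ^ (n + 1) :=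
          Summable.sum_le_tsum (Finset.range N)
            (fun i _ => mul_nonneg (hd_nonneg i) (pow_nonneg hr0.le _)) hsum.summable
      _ = 1 - (deriv f (r : ℂ) * (q (r : ℂ) * (1 + S (r : ℂ)))).re := hsum.tsum_eq
      _ ≤ 1 := by linarith
  have hdsum : Summable (fun n : ℕ => (((n : ℝ) + 1) / μ - 1) * b (n + 1)) :=
    summable_of_sum_range_le hd_nonneg hpartial
  have hdtsum : ∑' n : ℕ, (((n : ℝ) + 1) / μ - 1) * b (n + 1) ≤ 1 :=
    Real.tsum_le_of_sum_range_le hd_nonneg hpartial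
  -- final assembly
  refine ⟨⟨hfa, hf0, hf'0⟩, hfne, ?_⟩
  intro z hz
  have h1 := hG z hz
  rw [hGeq z hz] at h1
  have h2 : ‖deriv f z * (if z = 0 then 1 else (z / f z) ^ ((μ : ℂ) + 1)) - 1‖
      ≤ ∑' n : ℕ, (((n : ℝ) + 1) / μ - 1) * b (n + 1) := by
    rw [← h1.tsum_eq]
    apply tsum_of_norm_bounded hdsum.hasSum
    intro n
    rw [norm_mul, norm_pow, Complex.norm_real, Real.norm_eq_abs]
    have habs : |(1 - ((n : ℝ) + 1) / μ) * b (n + 1)| = (((n : ℝ) + 1) / μ - 1) * b (n + 1) := by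
      rw [show (1 - ((n : ℝ) + 1) / μ) * b (n + 1)
          = -(((((n : ℝ) + 1) / μ - 1)) * b (n + 1)) by ring, _root_.abs_neg,
        _root_.abs_of_nonneg (hd_nonneg n)]
    rw [habs]
    calc (((n : ℝ) + 1) / μ - 1) * b (n + 1) * ‖z‖ ^ (n + 1)
        ≤ (((n : ℝ) + 1) / μ - 1) * b (n + 1) * 1 := by
          apply mul_le_mul_of_nonneg_left _ (hd_nonneg n)
          exact pow_le_one₀ (norm_nonneg z) ((hmem z).1 hz).le
      _ = (((n : ℝ) + 1) / μ - 1) * b (n + 1) := mul_one _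
  exact h2.trans hdtsum
end
end

section
/- Let 0 < μ ≤ 1 and let f ∈ 𝒜 with f(z) ≠ 0 for z ∈ 𝔻 ∖ {0} have the representation (z/f(z))^μ = 1 + Σ_{n=1}^∞ b_n z^n with b_n ≥ 0 for all n. Then f ∈ 𝒰(1, μ) if and only if Σ_{n=1}^∞ (n − μ) b_n ≤ μ. -/
open Complex Metric Set

noncomputable section

open Filter FormalMultilinearSeries

lemma analyticAt_deriv' {f : ℂ → ℂ} {z : ℂ} (h : AnalyticAt ℂ f z) :
    AnalyticAt ℂ (deriv f) z := by
  have h2 := h.eventually_analyticAt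
  rw [Filter.eventually_iff_exists_mem] at h2
  obtain ⟨s, hsn, hall⟩ := h2
  exact (AnalyticOnNhd.deriv (fun x hx => hall x hx)) z (mem_of_mem_nhds hsn)

lemma deriv_identity (μ : ℝ) (f : ℂ → ℂ) (hf : AnalyticOnNhd ℂ f unitDisk)
    (hf0 : ∀ z ∈ unitDisk, z ≠ 0 → f z ≠ 0)
    (hganal : ∀ z ∈ unitDisk, AnalyticAt ℂ (pw f μ) z)
    (z : ℂ) (hz : z ∈ unitDisk) (hz0 : z ≠ 0) :
    z * f z * deriv (pw f μ) z = (μ:ℂ) * pw f μ z * (f z - z * deriv f z) := by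
  set S : Set ℂ := unitDisk ∩ {0}ᶜ with hS
  have hSopen : IsOpen S := isOpen_ball.inter isOpen_compl_singleton
  have hzS : z ∈ S := ⟨hz, hz0⟩
  set q : ℂ → ℂ := fun w => w / f w with hq
  set E : ℂ → ℂ := fun w =>
    w * f w * deriv (pw f μ) w - (μ:ℂ) * pw f μ w * (f w - w * deriv f w) with hE
  have slit : ∀ w ∈ S, q w ∈ slitPlane → E w = 0 := by
    intro w hw hslit
    have hw0 : w ≠ 0 := hw.2
    have hfw : f w ≠ 0 := hf0 w hw.1 hw0
    have hqw0 : q w ≠ 0 := div_ne_zero hw0 hfw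
    have hqd : HasDerivAt q ((f w - w * deriv f w) / (f w) ^ 2) w := by
      have := (hasDerivAt_id' w).div ((hf w hw.1).differentiableAt.hasDerivAt) hfw
      rw [one_mul] at this
      exact this
    have hc : HasDerivAt (fun x => q x ^ (μ:ℂ))
        ((μ:ℂ) * q w ^ ((μ:ℂ) - 1) * ((f w - w * deriv f w) / (f w) ^ 2)) w :=
      hqd.cpow_const hslit
    have heq : pw f μ =ᶠ[nhds w] fun x => q x ^ (μ:ℂ) := by
      filter_upwards [hSopen.mem_nhds hw] with x hx
      have hx0 : x ≠ 0 := hx.2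
      simp [pw, if_neg hx0, hq]
    have hder : deriv (pw f μ) w
        = (μ:ℂ) * q w ^ ((μ:ℂ) - 1) * ((f w - w * deriv f w) / (f w) ^ 2) := by
      rw [heq.deriv_eq, hc.deriv]
    have hpww : pw f μ w = q w ^ (μ:ℂ) := by simp [pw, if_neg hw0, hq]
    have hsplit : q w ^ (μ:ℂ) = q w ^ ((μ:ℂ) - 1) * q w := by
      conv_lhs => rw [show (μ:ℂ) = ((μ:ℂ) - 1) + 1 by ring]
      rw [Complex.cpow_add _ _ hqw0, Complex.cpow_one]
    have hfinv : f w * (f w)⁻¹ = 1 := mul_inv_cancel₀ hfw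
    show w * f w * deriv (pw f μ) w - (μ:ℂ) * pw f μ w * (f w - w * deriv f w) = 0
    rw [hder, hpww, hsplit]
    simp only [hq]
    linear_combination ((μ:ℂ) * (w / f w) ^ ((μ:ℂ) - 1) * w * (f w - w * deriv f w) * (f w)⁻¹) * hfinv
  have hqan : AnalyticAt ℂ q z := (analyticAt_id).div (hf z hz) (hf0 z hz hz0)
  have hfz : f z ≠ 0 := hf0 z hz hz0
  have hqz0 : q z ≠ 0 := div_ne_zero hz0 hfz
  have hEz : E z = 0 := by
    rcases hqan.eventually_constant_or_nhds_le_map_nhds with hconst | hmap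
    · have hfeq : f =ᶠ[nhds z] fun x => x / q z := by
        filter_upwards [hconst, hSopen.mem_nhds hzS] with x hx hxS
        have hfx : f x ≠ 0 := hf0 x hxS.1 hxS.2
        have h1 : x = q z * f x := by
          rw [← hx]
          simp only [hq]
          field_simp
        rw [eq_div_iff hqz0, mul_comm]
        exact h1.symm
      have hgeq : pw f μ =ᶠ[nhds z] fun _ => q z ^ (μ:ℂ) := by
        filter_upwards [hconst, hSopen.mem_nhds hzS] with x hx hxS
        have hx0 : x ≠ 0 := hxS.2
        simp only [hq] at hx
        simp only [pw, if_neg hx0]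
        rw [hx]
      have hdg : deriv (pw f μ) z = 0 := by rw [hgeq.deriv_eq, deriv_const]
      have hdf : deriv f z = 1 / q z := by
        rw [hfeq.deriv_eq]
        simpa using ((hasDerivAt_id z).div_const (q z)).deriv
      have hfzval : f z = z / q z := by
        simp only [hq]
        field_simp
      rw [hE]
      simp only [hdg, hdf, mul_zero, zero_sub, zero_mul]
      rw [hfzval]
      field_simp
      ring
    · by_cases hsp : q z ∈ slitPlane
      · exact slit z hzS hsp
      have him0 : (q z).im = 0 := by
        rw [Complex.mem_slitPlane_iff] at hsp
        push_neg at hsp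
        exact hsp.2
      have hfreq : ∃ᶠ w in nhds (q z), w ∈ slitPlane := by
        have htend : Tendsto (fun n : ℕ => q z + ((1 / ((n:ℝ) + 1) : ℝ) : ℂ) * Complex.I)
            atTop (nhds (q z)) := by
          have h1 : Tendsto (fun n : ℕ => (1 / ((n:ℝ) + 1) : ℝ)) atTop (nhds 0) :=
            tendsto_one_div_add_atTop_nhds_zero_nat
          have h2 : Tendsto (fun n : ℕ => ((1 / ((n:ℝ) + 1) : ℝ) : ℂ)) atTop (nhds 0) := by
            have := (Complex.continuous_ofReal.tendsto 0).comp h1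
            simpa [Function.comp_def] using this
          have := h2.mul_const Complex.I
          simpa using tendsto_const_nhds.add this
        apply htend.frequently
        apply Filter.Eventually.frequently
        filter_upwards with n
        apply Complex.mem_slitPlane_iff.mpr
        right
        have hpos : (0:ℝ) < 1 / ((n:ℝ) + 1) := by positivity
        simp only [Complex.add_im, Complex.mul_im, Complex.ofReal_re, Complex.I_im,
          Complex.ofReal_im, Complex.I_re, him0, mul_one, mul_zero, add_zero, zero_add]
        positivity
      have hfreqz : ∃ᶠ x in nhds z, q x ∈ slitPlane := by
        have := hfreq.filter_mono hmap
        rwa [Filter.frequently_map] at this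
      have hfreqE : ∃ᶠ x in nhds z, E x = 0 := by
        apply (hfreqz.and_eventually (hSopen.eventually_mem hzS)).mono
        rintro x ⟨h1, h2⟩
        exact slit x h2 h1
      have hEcont : ContinuousAt E z := by
        have hfa : AnalyticAt ℂ f z := hf z hz
        have hga : AnalyticAt ℂ (pw f μ) z := hganal z hz
        have : AnalyticAt ℂ E z :=
          ((analyticAt_id.mul hfa).mul (analyticAt_deriv' hga)).sub
            ((analyticAt_const.mul hga).mul (hfa.sub (analyticAt_id.mul (analyticAt_deriv' hfa))))
        exact this.continuousAt
      have : E z ∈ closure ({0} : Set ℂ) :=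
        mem_closure_of_frequently_of_tendsto hfreqE hEcont.tendsto
      simpa using this
  exact sub_eq_zero.mp (by simpa [hE] using hEz)

lemma ball_lemma (c : ℕ → ℂ) (g : ℂ → ℂ)
    (hrep : ∀ z : ℂ, ‖z‖ < 1 → HasSum (fun n : ℕ => c n • z ^ n) (g z))
    (r : NNReal) (hr1 : (r : ℝ) < 1) (hr0 : 0 < r) :
    HasFPowerSeriesOnBall g (ofScalars ℂ c) 0 r := by
  constructor
  · apply le_radius_of_summable_norm
    have hs : Summable (fun n : ℕ => ‖c n • ((r : ℝ) : ℂ) ^ n‖) :=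
      summable_norm_iff.mpr (hrep ((r:ℝ):ℂ) (by simpa using hr1)).summable
    apply hs.congr
    intro n
    rw [ofScalars_norm, norm_smul, norm_pow]
    simp
  · exact_mod_cast hr0
  · intro y hy
    have hy' : ‖y‖ < 1 := by
      rw [Metric.emetric_ball_nnreal, mem_ball_zero_iff] at hy
      calc ‖y‖ = ((‖y‖₊ : ℝ)) := rfl
      _ < r := by exact_mod_cast hy
      _ < 1 := hr1
    rw [zero_add]
    exact (hrep y hy').congr_fun fun n => (ofScalars_apply_eq c y n).symm |>.symm

lemma deriv_sum_lemma (c : ℕ → ℂ) (g : ℂ → ℂ) (r : NNReal)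
    (H : HasFPowerSeriesOnBall g (ofScalars ℂ c) 0 r) (z : ℂ) (hz : ‖z‖₊ < r) :
    HasSum (fun n : ℕ => ((n : ℂ) + 1) * c (n+1) * z ^ (n+1)) (z * deriv g z) := by
  have hs := (H.fderiv).hasSum (y := z) (by simpa using (NNReal.coe_lt_coe.mpr hz : ‖z‖ < (r:ℝ)))
  have hs2 := hs.mapL (ContinuousLinearMap.apply ℂ ℂ z)
  simp only [ContinuousLinearMap.apply_apply] at hs2
  have : fderiv ℂ g (0 + z) z = z * deriv g z := by
    rw [zero_add, show z = z • (1:ℂ) by simp, map_smul, fderiv_apply_one_eq_deriv]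
    simp [smul_eq_mul]
  rw [this] at hs2
  have e : (fun n : ℕ => ((n : ℂ) + 1) * c (n+1) * z ^ (n+1))
      = fun n => (((ofScalars ℂ c).derivSeries n) fun _ => z) z := by
    funext n
    rw [derivSeries_apply_diag, ofScalars_apply_eq]
    ring_nf
  rw [e]
  exact hs2

lemma key (μ : ℝ) (hμ₀ : 0 < μ) (f : ℂ → ℂ) (hfA : InA f)
    (hf0 : ∀ z ∈ unitDisk, z ≠ 0 → f z ≠ 0) (b : ℕ → ℝ)
    (hrepr : ∀ z ∈ unitDisk,
      HasSum (fun n : ℕ => (b (n + 1) : ℂ) * z ^ (n + 1)) (pw f μ z - 1)) :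
    ∀ z ∈ unitDisk,
      HasSum (fun n : ℕ => (((μ:ℂ) - ((n:ℂ) + 1)) / (μ:ℂ)) * (b (n+1) : ℂ) * z ^ (n+1))
        (deriv f z * (if z = 0 then 1 else (z / f z) ^ ((μ:ℂ) + 1)) - 1) := by
  have hμC : (μ:ℂ) ≠ 0 := by exact_mod_cast hμ₀.ne'
  set c : ℕ → ℂ := fun n => if n = 0 then 1 else (b n : ℂ) with hc
  have hmem : ∀ z : ℂ, ‖z‖ < 1 → z ∈ unitDisk := by
    intro z hz; simpa [unitDisk, mem_ball_zero_iff] using hz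
  have hrep' : ∀ z : ℂ, ‖z‖ < 1 → HasSum (fun n : ℕ => c n • z ^ n) (pw f μ z) := by
    intro z hz
    apply (hasSum_nat_add_iff' 1).mp
    have h2 : (pw f μ z - ∑ i ∈ Finset.range 1, c i • z ^ i) = pw f μ z - 1 := by
      simp [hc]
    rw [h2]
    exact (hrepr z (hmem z hz)).congr_fun
      (fun n => by simp [hc, smul_eq_mul, Nat.succ_ne_zero])
  -- power series ball structure at every radius < 1
  have Hball : ∀ r : NNReal, (r:ℝ) < 1 → 0 < r →
      HasFPowerSeriesOnBall (pw f μ) (ofScalars ℂ c) 0 r :=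
    fun r h1 h0 => ball_lemma c (pw f μ) hrep' r h1 h0
  have hganal : ∀ z ∈ unitDisk, AnalyticAt ℂ (pw f μ) z := by
    intro z hz
    have hz' : ‖z‖ < 1 := by simpa [unitDisk, mem_ball_zero_iff] using hz
    have hv : (0:ℝ) ≤ (‖z‖+1)/2 := by positivity
    set r : NNReal := ⟨(‖z‖+1)/2, hv⟩ with hr
    have hrc : (r : ℝ) = (‖z‖+1)/2 := rfl
    have hr1 : (r:ℝ) < 1 := by rw [hrc]; linarith
    have hzr : ‖z‖₊ < r := by
      rw [← NNReal.coe_lt_coe, coe_nnnorm, hrc]; linarith [norm_nonneg z]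
    have hr0 : 0 < r := lt_of_le_of_lt zero_le hzr
    exact (Hball r hr1 hr0).analyticAt_of_mem
      (by simpa [EMetric.mem_ball] using (NNReal.coe_lt_coe.mpr hzr : ‖z‖ < (r:ℝ)))
  intro z hz
  have hz' : ‖z‖ < 1 := by simpa [unitDisk, mem_ball_zero_iff] using hz
  -- derivative sum
  have hv : (0:ℝ) ≤ (‖z‖+1)/2 := by positivity
  set r : NNReal := ⟨(‖z‖+1)/2, hv⟩ with hr
  have hrc : (r : ℝ) = (‖z‖+1)/2 := rfl
  have hr1 : (r:ℝ) < 1 := by rw [hrc]; linarith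
  have hzr : ‖z‖₊ < r := by
    rw [← NNReal.coe_lt_coe, coe_nnnorm, hrc]; linarith [norm_nonneg z]
  have hr0 : 0 < r := lt_of_le_of_lt zero_le hzr
  have hds := deriv_sum_lemma c (pw f μ) r (Hball r hr1 hr0) z hzr
  have hcsucc : ∀ n : ℕ, c (n+1) = (b (n+1) : ℂ) := fun n => by simp [hc]
  by_cases hz0 : z = 0
  · subst hz0
    rw [if_pos rfl]
    have : ∀ n : ℕ, (((μ:ℂ) - ((n:ℂ) + 1)) / (μ:ℂ)) * (b (n+1) : ℂ) * (0:ℂ) ^ (n+1) = 0 := by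
      intro n; simp
    rw [show deriv f 0 * 1 - 1 = (0:ℂ) by rw [hfA.2.2]; ring]
    exact (hasSum_zero).congr_fun fun n => (this n)
  · rw [if_neg hz0]
    have hfz : f z ≠ 0 := hf0 z hz hz0
    have hid := deriv_identity μ f hfA.1 hf0 hganal z hz hz0
    have comb := (hrepr z hz).sub (hds.mul_left ((μ:ℂ)⁻¹))
    have hterm : ∀ n : ℕ,
        (((μ:ℂ) - ((n:ℂ) + 1)) / (μ:ℂ)) * (b (n+1) : ℂ) * z ^ (n+1)
          = (b (n+1) : ℂ) * z ^ (n+1) - (μ:ℂ)⁻¹ * (((n:ℂ) + 1) * c (n+1) * z ^ (n+1)) := by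
      intro n
      rw [hcsucc]
      field_simp
    have hval : (pw f μ z - 1) - (μ:ℂ)⁻¹ * (z * deriv (pw f μ) z)
        = deriv f z * ((z / f z) ^ ((μ:ℂ) + 1)) - 1 := by
      have hq0 : z / f z ≠ 0 := div_ne_zero hz0 hfz
      have hcp : (z / f z) ^ ((μ:ℂ)+1) = (z / f z) ^ (μ:ℂ) * (z / f z) := by
        rw [Complex.cpow_add _ _ hq0, Complex.cpow_one]
      have hgz : pw f μ z = (z / f z) ^ (μ:ℂ) := if_neg hz0
      rw [hcp, ← hgz]
      field_simp
      linear_combination -hid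
    rw [← hval]
    exact comb.congr_fun hterm

/-- coefficient characterization of `𝒰(1, μ)` for nonnegative coefficients. -/
theorem stmt7 (μ : ℝ) (hμ₀ : 0 < μ) (hμ₁ : μ ≤ 1)
    (f : ℂ → ℂ) (hfA : InA f) (hf0 : ∀ z ∈ unitDisk, z ≠ 0 → f z ≠ 0)
    (b : ℕ → ℝ) (hb : ∀ n, 1 ≤ n → 0 ≤ b n)
    (hrepr : ∀ z ∈ unitDisk,
      HasSum (fun n : ℕ => (b (n + 1) : ℂ) * z ^ (n + 1)) (pw f μ z - 1)) :
    InU f 1 μ ↔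
      (Summable (fun n : ℕ => (((n : ℝ) + 1) - μ) * b (n + 1)) ∧
       ∑' n : ℕ, (((n : ℝ) + 1) - μ) * b (n + 1) ≤ μ) := by
  have hkey := key μ hμ₀ f hfA hf0 b hrepr
  have hμC : (μ:ℂ) ≠ 0 := by exact_mod_cast hμ₀.ne'
  set v : ℕ → ℝ := fun n => (((n : ℝ) + 1) - μ) * b (n + 1) with hv
  have hv0 : ∀ n, 0 ≤ v n := by
    intro n
    apply mul_nonneg _ (hb (n+1) (by omega))
    have : (1:ℝ) ≤ (n:ℝ) + 1 := by
      have : (0:ℝ) ≤ (n:ℝ) := Nat.cast_nonneg n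
      linarith
    linarith
  constructor
  · rintro ⟨-, -, hbound⟩
    have hbd : ∀ N : ℕ, ∑ n ∈ Finset.range N, v n ≤ μ := by
      intro N
      have hrb : ∀ r : ℝ, 0 ≤ r → r < 1 →
          ∑ n ∈ Finset.range N, v n * r ^ (n+1) ≤ μ := by
        intro r hr0 hr1
        have hzmem : ((r:ℂ)) ∈ unitDisk := by
          rw [unitDisk, mem_ball_zero_iff, Complex.norm_real]
          rwa [Real.norm_eq_abs, _root_.abs_of_nonneg hr0]
        have hs := hkey (r:ℂ) hzmem
        set t : ℕ → ℝ := fun n => ((μ - ((n:ℝ)+1))/μ) * b (n+1) * r^(n+1) with ht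
        have hcast : ∀ n, ((t n : ℝ) : ℂ)
            = (((μ:ℂ) - ((n:ℂ) + 1)) / (μ:ℂ)) * (b (n+1) : ℂ) * ((r:ℂ)) ^ (n+1) := by
          intro n; simp only [ht]; push_cast; ring
        have hsum_t : Summable t :=
          Complex.summable_ofReal.mp (hs.summable.congr (fun n => (hcast n).symm))
        have hst : HasSum (fun n => ((t n : ℝ):ℂ)) (((∑' n, t n : ℝ)) : ℂ) :=
          Complex.hasSum_ofReal.mpr hsum_t.hasSum
        have huniq : deriv f (r:ℂ) * (if (r:ℂ) = 0 then 1
            else ((r:ℂ) / f (r:ℂ)) ^ ((μ:ℂ) + 1)) - 1 = (((∑' n, t n : ℝ)) : ℂ) :=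
          hs.unique (hst.congr_fun fun n => (hcast n).symm)
        have habs : |∑' n, t n| ≤ 1 := by
          have h2 := hbound (r:ℂ) hzmem
          rw [huniq] at h2
          rwa [Complex.norm_real, Real.norm_eq_abs] at h2
        have htneg : ∀ n, 0 ≤ -t n := by
          intro n
          simp only [ht]
          have h1 : μ - ((n:ℝ)+1) ≤ 0 := by
            have : (0:ℝ) ≤ (n:ℝ) := Nat.cast_nonneg n
            linarith
          have h2 : 0 ≤ b (n+1) := hb (n+1) (by omega)
          have h3 : 0 ≤ r ^ (n+1) := pow_nonneg hr0 _
          simp only [neg_nonneg]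
          apply mul_nonpos_of_nonpos_of_nonneg _ h3
          apply mul_nonpos_of_nonpos_of_nonneg _ h2
          exact div_nonpos_of_nonpos_of_nonneg h1 hμ₀.le
        have hpart : ∑ n ∈ Finset.range N, (-t n) ≤ ∑' n, (-t n) :=
          Summable.sum_le_tsum (Finset.range N) (fun n _ => htneg n) hsum_t.neg
        have htsumneg : ∑' n, (-t n) = -∑' n, t n := tsum_neg
        have hle1 : ∑' n, (-t n) ≤ 1 := by
          rw [htsumneg]
          calc -∑' n, t n ≤ |∑' n, t n| := neg_le_abs _
          _ ≤ 1 := habs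
        have hterm : ∀ n, v n * r^(n+1) = μ * (-t n) := by
          intro n
          simp only [hv, ht]
          field_simp
          ring
        calc ∑ n ∈ Finset.range N, v n * r ^ (n+1)
            = μ * ∑ n ∈ Finset.range N, (-t n) := by
              rw [Finset.mul_sum]; exact Finset.sum_congr rfl fun n _ => hterm n
          _ ≤ μ * 1 := by
              apply mul_le_mul_of_nonneg_left _ hμ₀.le
              exact hpart.trans hle1
          _ = μ := mul_one μ
      -- take the limit r → 1⁻
      have h1c : (1:ℝ) ∈ closure (Set.Ioo (0:ℝ) 1) := by
        rw [closure_Ioo (by norm_num : (0:ℝ) ≠ 1)]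
        exact ⟨by norm_num, le_refl 1⟩
      have hne := mem_closure_iff_nhdsWithin_neBot.mp h1c
      have hcont : Tendsto (fun r : ℝ => ∑ n ∈ Finset.range N, v n * r ^ (n+1))
          (nhdsWithin 1 (Set.Ioo 0 1)) (nhds (∑ n ∈ Finset.range N, v n * (1:ℝ) ^ (n+1))) := by
        apply Filter.Tendsto.mono_left _ nhdsWithin_le_nhds
        exact (Continuous.tendsto (by continuity) 1)
      have hev : ∀ᶠ r in nhdsWithin (1:ℝ) (Set.Ioo 0 1),
          ∑ n ∈ Finset.range N, v n * r ^ (n+1) ≤ μ := by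
        filter_upwards [self_mem_nhdsWithin] with r hr
        exact hrb r hr.1.le hr.2
      have := le_of_tendsto hcont hev
      simpa using this
    exact ⟨summable_of_sum_range_le hv0 hbd, Real.tsum_le_of_sum_range_le hv0 hbd⟩
  · rintro ⟨hsumm, hle⟩
    refine ⟨hfA, hf0, ?_⟩
    intro z hz
    have hz' : ‖z‖ < 1 := by simpa [unitDisk, mem_ball_zero_iff] using hz
    have hs := hkey z hz
    rw [← hs.tsum_eq]
    have hnormle : ∀ n : ℕ, ‖(((μ:ℂ) - ((n:ℂ) + 1)) / (μ:ℂ)) * (b (n+1) : ℂ) * z ^ (n+1)‖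
        ≤ μ⁻¹ * v n := by
      intro n
      have hb' : 0 ≤ b (n+1) := hb (n+1) (by omega)
      have hcoef : ‖(((μ:ℂ) - ((n:ℂ) + 1)) / (μ:ℂ))‖ = (((n:ℝ)+1) - μ)/μ := by
        rw [show (((μ:ℂ) - ((n:ℂ) + 1)) / (μ:ℂ)) = (((μ - ((n:ℝ)+1))/μ : ℝ) : ℂ) by
          push_cast; ring]
        rw [Complex.norm_real, Real.norm_eq_abs, abs_div, abs_of_pos hμ₀]
        rw [abs_of_nonpos (by
          have : (0:ℝ) ≤ (n:ℝ) := Nat.cast_nonneg n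
          linarith)]
        ring
      rw [norm_mul, norm_mul, hcoef, norm_pow]
      have h1 : ‖(b (n+1) : ℂ)‖ = b (n+1) := by
        rw [Complex.norm_real, Real.norm_eq_abs, _root_.abs_of_nonneg hb']
      rw [h1]
      have h2 : ‖z‖ ^ (n+1) ≤ 1 := pow_le_one₀ (norm_nonneg z) hz'.le
      have h3 : 0 ≤ (((n:ℝ)+1) - μ)/μ * b (n+1) := by
        apply mul_nonneg _ hb'
        apply div_nonneg _ hμ₀.le
        have : (0:ℝ) ≤ (n:ℝ) := Nat.cast_nonneg n
        linarith
      calc (((n:ℝ)+1) - μ)/μ * b (n+1) * ‖z‖^(n+1)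
          ≤ (((n:ℝ)+1) - μ)/μ * b (n+1) * 1 := by
            exact mul_le_mul_of_nonneg_left h2 h3
        _ = μ⁻¹ * v n := by simp only [hv]; field_simp
    have hsn : Summable (fun n : ℕ => ‖(((μ:ℂ) - ((n:ℂ) + 1)) / (μ:ℂ)) * (b (n+1) : ℂ) * z ^ (n+1)‖) :=
      Summable.of_nonneg_of_le (fun n => norm_nonneg _) hnormle (hsumm.mul_left μ⁻¹)
    calc ‖∑' n : ℕ, (((μ:ℂ) - ((n:ℂ) + 1)) / (μ:ℂ)) * (b (n+1) : ℂ) * z ^ (n+1)‖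
        = ‖∑' n : ℕ, (((μ:ℂ) - ((n:ℂ) + 1)) / (μ:ℂ)) * (b (n+1) : ℂ) * z ^ (n+1)‖ := rfl
      _ ≤ ∑' n : ℕ, ‖(((μ:ℂ) - ((n:ℂ) + 1)) / (μ:ℂ)) * (b (n+1) : ℂ) * z ^ (n+1)‖ :=
          norm_tsum_le_tsum_norm hsn
      _ ≤ ∑' n : ℕ, μ⁻¹ * v n := Summable.tsum_le_tsum hnormle hsn (hsumm.mul_left μ⁻¹)
      _ = μ⁻¹ * ∑' n : ℕ, v n := tsum_mul_left
      _ ≤ μ⁻¹ * μ := by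
          apply mul_le_mul_of_nonneg_left hle (inv_nonneg.mpr hμ₀.le)
      _ = 1 := inv_mul_cancel₀ hμ₀.ne'
end
end

section
/- Let 0 ≤ α < 1 and μ > 0. Suppose f ∈ 𝒮*(α) has the representation (z/f(z))^μ = 1 + Σ_{n=1}^∞ b_n z^n with b_n ≥ 0 for all n. Then Σ_{n=1}^∞ (n − μ(1−α)) b_n ≤ μ(1−α). In particular, if moreover 0 < μ ≤ 1, then f ∈ 𝒰(1−α, μ). -/
open Complex Metric Set
open Filter Topology

noncomputable section

lemma aux_deriv_summable (a : ℕ → ℝ) (ha : ∀ n, 0 ≤ a n)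
    (hconv : ∀ r : ℝ, 0 ≤ r → r < 1 → Summable fun n : ℕ => a n * r ^ (n + 1))
    (ρ : ℝ) (hρ0 : 0 ≤ ρ) (hρ1 : ρ < 1) :
    Summable fun n : ℕ => ((n : ℝ) + 1) * a n * ρ ^ n := by
  set σ : ℝ := (ρ + 1) / 2 with hσ
  have hσ0 : 0 < σ := by positivity
  have hρσ : ρ < σ := by simp only [hσ]; linarith
  have hσ1 : σ < 1 := by simp only [hσ]; linarith
  have hsum := hconv σ hσ0.le hσ1
  have hM : ∀ n, a n * σ ^ (n + 1) ≤ ∑' m : ℕ, a m * σ ^ (m + 1) := by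
    intro n
    exact hsum.le_tsum n (fun m _ => mul_nonneg (ha m) (by positivity))
  set M : ℝ := ∑' m : ℕ, a m * σ ^ (m + 1) with hMdef
  have hx : ‖ρ / σ‖ < 1 := by
    rw [Real.norm_eq_abs, _root_.abs_of_nonneg (by positivity)]
    exact (div_lt_one hσ0).2 hρσ
  have hgeo : Summable fun n : ℕ => ((n : ℝ) + 1) * (ρ / σ) ^ n := by
    have h1 : Summable fun n : ℕ => (n : ℝ) * (ρ / σ) ^ n := by
      simpa using summable_pow_mul_geometric_of_norm_lt_one (R := ℝ) 1 (r := ρ / σ) hx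
    have h2 : Summable fun n : ℕ => (ρ / σ) ^ n :=
      summable_geometric_of_lt_one (by positivity) ((div_lt_one hσ0).2 hρσ)
    simpa [add_mul, one_mul] using h1.add h2
  clear_value σ
  refine Summable.of_nonneg_of_le
    (fun n => mul_nonneg (mul_nonneg (by positivity) (ha n)) (by positivity))
    (fun n => ?_) (hgeo.mul_left (M / σ))
  have hb : a n ≤ M / σ ^ (n + 1) := by
    rw [le_div_iff₀ (by positivity)]
    exact hM n
  calc ((n : ℝ) + 1) * a n * ρ ^ n ≤ ((n : ℝ) + 1) * (M / σ ^ (n + 1)) * ρ ^ n := by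
        apply mul_le_mul_of_nonneg_right _ (by positivity)
        exact mul_le_mul_of_nonneg_left hb (by positivity)
    _ = (M / σ) * (((n : ℝ) + 1) * (ρ / σ) ^ n) := by
        have hσn : σ ≠ 0 := hσ0.ne'
        rw [div_pow, pow_succ]
        field_simp

lemma aux_hasDerivAt (a : ℕ → ℝ) (ha : ∀ n, 0 ≤ a n)
    (hconv : ∀ r : ℝ, 0 ≤ r → r < 1 → Summable fun n : ℕ => a n * r ^ (n + 1))
    (z : ℂ) (hz : ‖z‖ < 1) :
    HasDerivAt (fun y : ℂ => ∑' n : ℕ, (a n : ℂ) * y ^ (n + 1))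
      (∑' n : ℕ, (a n : ℂ) * ((n : ℂ) + 1) * z ^ n) z := by
  set ρ : ℝ := (‖z‖ + 1) / 2 with hρ
  have hz0 : 0 ≤ ‖z‖ := norm_nonneg z
  have hρ0 : 0 < ρ := by positivity
  have hρ1 : ρ < 1 := by simp only [hρ]; linarith
  have hzρ : ‖z‖ < ρ := by simp only [hρ]; linarith
  have hu : Summable fun n : ℕ => ((n : ℝ) + 1) * a n * ρ ^ n :=
    aux_deriv_summable a ha hconv ρ hρ0.le hρ1
  have := hasDerivAt_tsum_of_isPreconnected (F := ℂ) (𝕜 := ℂ)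
    (u := fun n : ℕ => ((n : ℝ) + 1) * a n * ρ ^ n)
    (g := fun n y => (a n : ℂ) * y ^ (n + 1))
    (g' := fun n y => (a n : ℂ) * ((n : ℂ) + 1) * y ^ n)
    (t := Metric.ball (0 : ℂ) ρ) (y₀ := 0) (y := z)
    hu isOpen_ball (convex_ball _ _).isPreconnected
    (fun n y _ => by
      have h := (hasDerivAt_pow (n + 1) y).const_mul (a n : ℂ)
      simpa [mul_assoc, mul_comm, mul_left_comm] using h)
    (fun n y _ => by
      rw [norm_mul, norm_mul, norm_pow]
      rw [Complex.norm_real, Real.norm_eq_abs, _root_.abs_of_nonneg (ha n)]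
      have h1 : ‖((n : ℂ) + 1)‖ = (n : ℝ) + 1 := by
        norm_cast
      rw [h1, mul_assoc]
      have hyρ : ‖y‖ ≤ ρ := by
        rename_i hy
        rw [Metric.mem_ball, dist_zero_right] at hy
        exact hy.le
      calc a n * (((n : ℝ) + 1) * ‖y‖ ^ n) ≤ a n * (((n : ℝ) + 1) * ρ ^ n) := by
            apply mul_le_mul_of_nonneg_left _ (ha n)
            exact mul_le_mul_of_nonneg_left (pow_le_pow_left₀ (norm_nonneg y) hyρ n) (by positivity)
        _ = ((n : ℝ) + 1) * a n * ρ ^ n := by ring)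
    (by simpa [Metric.mem_ball, dist_zero_right] using hρ0)
    (by simpa using summable_zero)
    (by simpa [Metric.mem_ball, dist_zero_right] using hzρ)
  exact this

/-- Local log-derivative identity for the power `(z/f z)^μ`. -/
lemma aux_key (f g S' : ℂ → ℂ) (μ : ℝ) (U : Set ℂ) (hU : IsOpen U)
    (hfd : ∀ z ∈ U, HasDerivAt f (deriv f z) z)
    (hgd : ∀ z ∈ U, HasDerivAt g (S' z) z)
    (hgpw : ∀ z ∈ U, z ≠ 0 → f z ≠ 0 → g z = (z / f z) ^ (μ : ℂ))
    (z₀ : ℂ) (hz₀U : z₀ ∈ U) (hz₀ : z₀ ≠ 0) (hf₀ : f z₀ ≠ 0) :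
    z₀ * f z₀ * S' z₀ = (μ : ℂ) * g z₀ * (f z₀ - z₀ * deriv f z₀) := by
  set w₀ : ℂ := z₀ / f z₀ with hw₀def
  have hw₀ : w₀ ≠ 0 := div_ne_zero hz₀ hf₀
  have hw₀pos : 0 < ‖w₀‖ := norm_pos_iff.mpr hw₀
  have hcf : ContinuousAt f z₀ := (hfd z₀ hz₀U).differentiableAt.continuousAt
  have hcw : ContinuousAt (fun z => z / f z) z₀ := continuousAt_id.div hcf hf₀
  have h1 : ∀ᶠ z in 𝓝 z₀, z ∈ U := hU.eventually_mem hz₀U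
  have h2 : ∀ᶠ z in 𝓝 z₀, z ≠ 0 := eventually_ne_nhds hz₀
  have h3 : ∀ᶠ z in 𝓝 z₀, f z ≠ 0 := hcf.eventually_ne hf₀
  have h4 : ∀ᶠ z in 𝓝 z₀, ‖z / f z - w₀‖ < ‖w₀‖ / 2 := by
    have : Tendsto (fun z => ‖z / f z - w₀‖) (𝓝 z₀) (𝓝 ‖w₀ - w₀‖) :=
      (continuous_norm.continuousAt.comp (hcw.sub continuousAt_const))
    rw [sub_self, norm_zero] at this
    exact this.eventually_lt_const (by positivity)
  obtain ⟨ε, hε, hball⟩ := Metric.eventually_nhds_iff_ball.1 (((h1.and h2).and (h3.and h4)))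
  set V : Set ℂ := Metric.ball z₀ ε with hVdef
  have hVz₀ : z₀ ∈ V := Metric.mem_ball_self hε
  -- basic facts on V
  have hvfact : ∀ z ∈ V, z ∈ U ∧ z ≠ 0 ∧ f z ≠ 0 ∧
      (z / f z) / w₀ ∈ Complex.slitPlane ∧ (z / f z) / w₀ ≠ 0 := by
    intro z hz
    obtain ⟨⟨hzU, hzne⟩, hfz, habs⟩ := hball z hz
    have hv1 : ‖(z / f z) / w₀ - 1‖ < 1 / 2 := by
      have : (z / f z) / w₀ - 1 = (z / f z - w₀) / w₀ := by field_simp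
      rw [this, norm_div]
      rw [div_lt_iff₀ hw₀pos]
      calc ‖z / f z - w₀‖ < ‖w₀‖ / 2 := habs
        _ = 1 / 2 * ‖w₀‖ := by ring
    have hre : 0 < ((z / f z) / w₀).re := by
      have h5 : |((z / f z) / w₀ - 1).re| ≤ ‖(z / f z) / w₀ - 1‖ :=
        Complex.abs_re_le_norm _
      have h6 : ((z / f z) / w₀ - 1).re = ((z / f z) / w₀).re - 1 := by simp
      have := abs_le.1 h5
      nlinarith [this.1]
    refine ⟨hzU, hzne, hfz, Or.inl hre, ?_⟩
    intro hcon
    rw [hcon] at hre; simp at hre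
  -- the local branch
  set L : ℂ → ℂ := fun z => Complex.log w₀ + Complex.log ((z / f z) / w₀) with hLdef
  set E : ℂ → ℂ := fun z => Complex.exp ((μ : ℂ) * L z) with hEdef
  have hEne : ∀ z, E z ≠ 0 := fun z => Complex.exp_ne_zero _
  -- derivative of L on V
  set L' : ℂ → ℂ := fun z =>
    ((1 * f z - z * deriv f z) / f z ^ 2 / w₀) / ((z / f z) / w₀) with hL'def
  have hLd : ∀ z ∈ V, HasDerivAt L (L' z) z := by
    intro z hz
    obtain ⟨hzU, hzne, hfz, hslit, hvne⟩ := hvfact z hz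
    have hdiv : HasDerivAt (fun y => y / f y) ((1 * f z - z * deriv f z) / f z ^ 2) z :=
      (hasDerivAt_id z).div (hfd z hzU) hfz
    have hdiv2 : HasDerivAt (fun y => (y / f y) / w₀)
        ((1 * f z - z * deriv f z) / f z ^ 2 / w₀) z := hdiv.div_const w₀
    have hlog := hdiv2.clog hslit
    exact hlog.const_add (Complex.log w₀)
  have hEd : ∀ z ∈ V, HasDerivAt E (E z * ((μ : ℂ) * L' z)) z := by
    intro z hz
    exact ((hLd z hz).const_mul (μ : ℂ)).cexp
  -- |E z| = |z / f z| ^ μ on V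
  have habsE : ∀ z ∈ V, ‖E z‖ = ‖z / f z‖ ^ μ := by
    intro z hz
    obtain ⟨hzU, hzne, hfz, hslit, hvne⟩ := hvfact z hz
    have hwz : z / f z ≠ 0 := div_ne_zero hzne hfz
    have hwzpos : 0 < ‖z / f z‖ := norm_pos_iff.mpr hwz
    have hvpos : 0 < ‖(z / f z) / w₀‖ := norm_pos_iff.mpr hvne
    rw [hEdef]
    simp only [Complex.norm_exp]
    have hre : ((μ : ℂ) * L z).re = μ * (L z).re := by simp
    have hLre : (L z).re = Real.log ‖z / f z‖ := by
      rw [hLdef]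
      simp only [Complex.add_re, Complex.log_re]
      rw [← Real.log_mul hw₀pos.ne' hvpos.ne', ← norm_mul]
      congr 2
      field_simp
    rw [hre, hLre, Real.rpow_def_of_pos hwzpos, mul_comm]
  -- |g z| = |z / f z| ^ μ on V
  have habsg : ∀ z ∈ V, ‖g z‖ = ‖z / f z‖ ^ μ := by
    intro z hz
    obtain ⟨hzU, hzne, hfz, _, _⟩ := hvfact z hz
    rw [hgpw z hzU hzne hfz, Complex.norm_cpow_real]
  -- h has constant modulus one
  set h : ℂ → ℂ := fun z => g z / E z with hhdef
  have habsh : ∀ z ∈ V, ‖h z‖ = 1 := by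
    intro z hz
    obtain ⟨hzU, hzne, hfz, _, _⟩ := hvfact z hz
    have hwz : z / f z ≠ 0 := div_ne_zero hzne hfz
    have hwzpos : 0 < ‖z / f z‖ := norm_pos_iff.mpr hwz
    rw [hhdef]
    simp only [norm_div]
    rw [habsg z hz, habsE z hz, div_self (by positivity)]
  have hhd : DifferentiableOn ℂ h V := by
    intro z hz
    exact (((hgd z (hvfact z hz).1).differentiableAt.div
      (hEd z hz).differentiableAt (hEne z))).differentiableWithinAt
  have hmax : IsMaxOn (norm ∘ h) V z₀ := by
    intro x hx
    simp only [Function.comp_apply, Set.mem_setOf_eq]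
    rw [habsh x hx, habsh z₀ hVz₀]
  have heq := Complex.eqOn_of_isPreconnected_of_isMaxOn_norm
    (convex_ball z₀ ε).isPreconnected isOpen_ball hhd hVz₀ hmax
  -- g = h z₀ * E on V
  have hgE : ∀ z ∈ V, g z = h z₀ * E z := by
    intro z hz
    have := heq hz
    simp only [Function.const_apply] at this
    rw [hhdef] at this
    field_simp at this
    rw [div_eq_div_iff (hEne z) (hEne z₀)] at this
    have hE0 : E z₀ ≠ 0 := hEne z₀
    show g z = g z₀ / E z₀ * E z
    rw [div_mul_eq_mul_div, eq_div_iff hE0]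
    linear_combination this
  -- derivative comparison at z₀
  have hgd₀ : HasDerivAt g (h z₀ * (E z₀ * ((μ : ℂ) * L' z₀))) z₀ := by
    have hev : (fun z => h z₀ * E z) =ᶠ[𝓝 z₀] g := by
      filter_upwards [Metric.ball_mem_nhds z₀ hε] with z hz
      exact (hgE z hz).symm
    exact (((hEd z₀ hVz₀).const_mul (h z₀))).congr_of_eventuallyEq hev.symm
  have huniq : S' z₀ = h z₀ * (E z₀ * ((μ : ℂ) * L' z₀)) :=
    (hgd z₀ hz₀U).unique hgd₀
  have hgz₀ : h z₀ * E z₀ = g z₀ := (hgE z₀ hVz₀).symm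
  -- compute L' z₀
  have hv₀ : (z₀ / f z₀) / w₀ = 1 := by
    rw [hw₀def]
    field_simp
  have hL'₀ : L' z₀ = (1 * f z₀ - z₀ * deriv f z₀) / f z₀ ^ 2 / w₀ := by
    rw [hL'def]
    simp only [hv₀, div_one]
  rw [huniq, hL'₀, hw₀def]
  have h2 : h z₀ * (E z₀ * ((μ:ℂ) * ((1 * f z₀ - z₀ * deriv f z₀) / f z₀ ^ 2 / (z₀ / f z₀))))
      = (h z₀ * E z₀) * ((μ:ℂ) * ((1 * f z₀ - z₀ * deriv f z₀) / f z₀ ^ 2 / (z₀ / f z₀))) := by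
    ring
  rw [h2, hgz₀]
  field_simp

lemma aux_limit (c : ℝ) (hc : 0 < c) (a : ℕ → ℝ) (ha : ∀ n, 0 ≤ a n)
    (hsum : ∀ r : ℝ, 0 < r → r < 1 →
      Summable (fun n : ℕ => (((n : ℝ) + 1) - c) * a n * r ^ (n + 1)))
    (hineq : ∀ r : ℝ, 0 < r → r < 1 →
      ∑' n : ℕ, (((n : ℝ) + 1) - c) * a n * r ^ (n + 1) ≤ c) :
    Summable (fun n : ℕ => (((n : ℝ) + 1) - c) * a n) ∧
      ∑' n : ℕ, (((n : ℝ) + 1) - c) * a n ≤ c := by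
  set t : ℕ → ℝ := fun n => (((n : ℝ) + 1) - c) * a n with htdef
  set q : ℕ → ℝ := fun n => if ((n : ℝ) + 1) < c then (c - ((n : ℝ) + 1)) * a n else 0 with hqdef
  set v : ℕ → ℝ := fun n => if ((n : ℝ) + 1) < c then 0 else t n with hvdef
  have hqnn : ∀ n, 0 ≤ q n := by
    intro n; simp only [hqdef]
    split
    · rename_i hcon
      exact mul_nonneg (by linarith) (ha n)
    · exact le_rfl
  have hvnn : ∀ n, 0 ≤ v n := by
    intro n; simp only [hvdef]
    split
    · exact le_rfl
    · rename_i hcon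
      push_neg at hcon
      exact mul_nonneg (by linarith) (ha n)
  have htvq : ∀ n, t n = v n - q n := by
    intro n; simp only [hvdef, hqdef]
    split
    · simp only [htdef]; ring
    · simp
  have hqzero : ∀ n ∉ Finset.range ⌈c⌉₊, q n = 0 := by
    intro n hn
    rw [Finset.mem_range, not_lt] at hn
    simp only [hqdef]
    rw [if_neg]
    push_neg
    calc c ≤ (⌈c⌉₊ : ℝ) := Nat.le_ceil c
      _ ≤ (n : ℝ) := by exact_mod_cast hn
      _ ≤ (n : ℝ) + 1 := by linarith
  have hqsum : Summable q := summable_of_ne_finset_zero hqzero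
  set K : ℝ := ∑' n, q n with hKdef
  have hK0 : 0 ≤ K := tsum_nonneg hqnn
  -- partial sums of v bounded by c + K
  have hpartial : ∀ N : ℕ, ∑ n ∈ Finset.range N, v n ≤ c + K := by
    intro N
    -- for each r in (0,1)
    have hr : ∀ r : ℝ, 0 < r → r < 1 →
        ∑ n ∈ Finset.range N, (if ((n : ℝ) + 1) < c then 0 else t n * r ^ (n + 1)) ≤ c + K := by
      intro r hr0 hr1
      set qr : ℕ → ℝ := fun n => if ((n : ℝ) + 1) < c then (c - ((n : ℝ) + 1)) * a n * r ^ (n + 1) else 0 with hqrdef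
      set vr : ℕ → ℝ := fun n => if ((n : ℝ) + 1) < c then 0 else t n * r ^ (n + 1) with hvrdef
      have hqrq : ∀ n, qr n ≤ q n := by
        intro n
        simp only [hqrdef, hqdef]
        split
        · rename_i hcon
          have h1 : r ^ (n + 1) ≤ 1 := pow_le_one₀ hr0.le hr1.le
          have h2 : 0 ≤ (c - ((n : ℝ) + 1)) * a n := mul_nonneg (by linarith) (ha n)
          nlinarith
        · exact le_rfl
      have hqrnn : ∀ n, 0 ≤ qr n := by
        intro n; simp only [hqrdef]
        split
        · rename_i hcon
          exact mul_nonneg (mul_nonneg (by linarith) (ha n)) (by positivity)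
        · exact le_rfl
      have hqrzero : ∀ n ∉ Finset.range ⌈c⌉₊, qr n = 0 := by
        intro n hn
        rw [Finset.mem_range, not_lt] at hn
        simp only [hqrdef]
        rw [if_neg]
        push_neg
        calc c ≤ (⌈c⌉₊ : ℝ) := Nat.le_ceil c
          _ ≤ (n : ℝ) := by exact_mod_cast hn
          _ ≤ (n : ℝ) + 1 := by linarith
      have hqrsum : Summable qr := summable_of_ne_finset_zero hqrzero
      have hvreq : ∀ n, vr n = t n * r ^ (n + 1) + qr n := by
        intro n
        simp only [hvrdef, hqrdef]
        split
        · rename_i hcon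
          simp only [htdef]; ring
        · simp
      have hvrsum : Summable vr := by
        rw [show vr = fun n => t n * r ^ (n + 1) + qr n from funext hvreq]
        exact (hsum r hr0 hr1).add hqrsum
      have hvrnn : ∀ n, 0 ≤ vr n := by
        intro n; simp only [hvrdef]
        split
        · exact le_rfl
        · rename_i hcon
          push_neg at hcon
          exact mul_nonneg (mul_nonneg (by linarith) (ha n)) (by positivity)
      calc ∑ n ∈ Finset.range N, vr n ≤ ∑' n, vr n := hvrsum.sum_le_tsum _ (fun n _ => hvrnn n)
        _ = (∑' n, t n * r ^ (n + 1)) + ∑' n, qr n := by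
            rw [show vr = fun n => t n * r ^ (n + 1) + qr n from funext hvreq]
            exact (hsum r hr0 hr1).tsum_add hqrsum
        _ ≤ c + K := by
            have h1 := hineq r hr0 hr1
            have h2 : ∑' n, qr n ≤ K := hqrsum.tsum_le_tsum hqrq hqsum
            have h3 : (∑' n, t n * r ^ (n + 1)) = ∑' n : ℕ, (((n : ℝ) + 1) - c) * a n * r ^ (n + 1) := rfl
            linarith
    -- take the limit r → 1⁻
    set F : ℝ → ℝ := fun r => ∑ n ∈ Finset.range N, (if ((n : ℝ) + 1) < c then 0 else t n * r ^ (n + 1)) with hFdef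
    have hFcont : Continuous F := by
      apply continuous_finset_sum
      intro n _
      split
      · exact continuous_const
      · exact continuous_const.mul (continuous_pow (n + 1))
    have hFtend : Filter.Tendsto F (nhdsWithin 1 (Set.Iio 1)) (nhds (F 1)) :=
      (hFcont.tendsto 1).mono_left nhdsWithin_le_nhds
    have hFle : F 1 ≤ c + K := by
      refine le_of_tendsto hFtend ?_
      filter_upwards [Ioo_mem_nhdsLT_of_mem (by constructor <;> norm_num : (1:ℝ) ∈ Set.Ioc 0 1)] with r hrmem
      exact hr r hrmem.1 hrmem.2
    have hF1 : F 1 = ∑ n ∈ Finset.range N, v n := by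
      rw [hFdef]
      apply Finset.sum_congr rfl
      intro n _
      simp only [hvdef]
      split <;> simp
    rw [← hF1]
    exact hFle
  have hvsum : Summable v := summable_of_sum_range_le hvnn hpartial
  have hvle : ∑' n, v n ≤ c + K := hvsum.tsum_le_of_sum_range_le hpartial
  have htsum : Summable t := by
    rw [show t = fun n => v n - q n from funext htvq]
    exact hvsum.sub hqsum
  constructor
  · exact htsum
  · have : ∑' n, t n = (∑' n, v n) - K := by
      rw [show t = fun n => v n - q n from funext htvq]
      exact hvsum.tsum_sub hqsum
    show tsum t ≤ c
    linarith

/-- coefficient condition for starlike functions of order `α`,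
and the consequence `f ∈ 𝒰(1-α, μ)` when `0 < μ ≤ 1`. -/
theorem stmt8 (μ α : ℝ) (hμ : 0 < μ) (hα₀ : 0 ≤ α) (hα₁ : α < 1)
    (f : ℂ → ℂ) (hf : InSstar f α)
    (b : ℕ → ℝ) (hb : ∀ n, 1 ≤ n → 0 ≤ b n)
    (hrepr : ∀ z ∈ unitDisk,
      HasSum (fun n : ℕ => (b (n + 1) : ℂ) * z ^ (n + 1)) (pw f μ z - 1)) :
    (Summable (fun n : ℕ => (((n : ℝ) + 1) - μ * (1 - α)) * b (n + 1)) ∧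
     ∑' n : ℕ, (((n : ℝ) + 1) - μ * (1 - α)) * b (n + 1) ≤ μ * (1 - α)) ∧
    (μ ≤ 1 → InU f (1 - α) μ) := by
  obtain ⟨⟨⟨hfA, hf0, hder1⟩, hInj⟩, hstar⟩ := hf
  have hD : IsOpen unitDisk := Metric.isOpen_ball
  have hb' : ∀ n : ℕ, 0 ≤ b (n + 1) := fun n => hb (n + 1) (by omega)
  have hmem : ∀ z : ℂ, z ∈ unitDisk ↔ ‖z‖ < 1 := fun z => mem_ball_zero_iff
  have h0D : (0 : ℂ) ∈ unitDisk := by rw [hmem]; norm_num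
  have hfnz : ∀ z ∈ unitDisk, z ≠ 0 → f z ≠ 0 := by
    intro z hz hzne hcon
    exact hzne (hInj hz h0D (by rw [hcon, hf0]))
  have hfd : ∀ z ∈ unitDisk, HasDerivAt f (deriv f z) z := fun z hz =>
    (hfA z hz).differentiableAt.hasDerivAt
  have hconv : ∀ r : ℝ, 0 ≤ r → r < 1 → Summable fun n : ℕ => b (n + 1) * r ^ (n + 1) := by
    intro r hr0 hr1
    have hrD : (r : ℂ) ∈ unitDisk := by
      rw [hmem, Complex.norm_real, Real.norm_eq_abs, _root_.abs_of_nonneg hr0]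
      exact hr1
    have hs := Complex.reCLM.summable (hrepr _ hrD).summable
    apply hs.congr
    intro n
    simp only [Complex.reCLM_apply, ← Complex.ofReal_pow, ← Complex.ofReal_mul, Complex.ofReal_re]
  set S' : ℂ → ℂ := fun z => ∑' n : ℕ, (b (n + 1) : ℂ) * ((n : ℂ) + 1) * z ^ n with hS'def
  have hgd : ∀ z ∈ unitDisk, HasDerivAt (pw f μ) (S' z) z := by
    intro z hz
    have hd0 := aux_hasDerivAt (fun n => b (n + 1)) hb' hconv z ((hmem z).1 hz)
    have hd1 : HasDerivAt (fun y : ℂ => (∑' n : ℕ, (b (n + 1) : ℂ) * y ^ (n + 1)) + 1)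
        (S' z) z := hd0.add_const 1
    apply hd1.congr_of_eventuallyEq
    filter_upwards [hD.eventually_mem hz] with y hy
    rw [(hrepr y hy).tsum_eq]
    ring
  have hkey : ∀ z ∈ unitDisk, z ≠ 0 →
      z * f z * S' z = (μ : ℂ) * pw f μ z * (f z - z * deriv f z) := by
    intro z hz hzne
    exact aux_key f (pw f μ) S' μ unitDisk hD hfd hgd
      (fun w _ hwne _ => by rw [pw, if_neg hwne]) z hz hzne (hfnz z hz hzne)
  set c : ℝ := μ * (1 - α) with hcdef
  have hc : 0 < c := mul_pos hμ (by linarith)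
  have hcμ : c ≤ μ := by
    rw [hcdef]
    nlinarith
  have hmain : ∀ r : ℝ, 0 < r → r < 1 →
      Summable (fun n : ℕ => (((n : ℝ) + 1) - c) * b (n + 1) * r ^ (n + 1)) ∧
      ∑' n : ℕ, (((n : ℝ) + 1) - c) * b (n + 1) * r ^ (n + 1) ≤ c := by
    intro r hr0 hr1
    have hrD : (r : ℂ) ∈ unitDisk := by
      rw [hmem, Complex.norm_real, Real.norm_eq_abs, _root_.abs_of_nonneg hr0.le]
      exact hr1
    have hrne : (r : ℂ) ≠ 0 := by exact_mod_cast hr0.ne'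
    have hfr : f (r : ℂ) ≠ 0 := hfnz _ hrD hrne
    have hs1 : Summable (fun n : ℕ => ((n : ℝ) + 1) * b (n + 1) * r ^ (n + 1)) := by
      have h := (aux_deriv_summable (fun n => b (n + 1)) hb' hconv r hr0.le hr1).mul_left r
      exact h.congr fun n => by ring
    have hs2 : Summable (fun n : ℕ => b (n + 1) * r ^ (n + 1)) := hconv r hr0.le hr1
    have hsplit : (fun n : ℕ => (((n : ℝ) + 1) - c) * b (n + 1) * r ^ (n + 1)) =
        fun n : ℕ => ((n : ℝ) + 1) * b (n + 1) * r ^ (n + 1) - c * (b (n + 1) * r ^ (n + 1)) :=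
      funext fun n => by ring
    have hsum : Summable (fun n : ℕ => (((n : ℝ) + 1) - c) * b (n + 1) * r ^ (n + 1)) := by
      rw [hsplit]; exact hs1.sub (hs2.mul_left c)
    refine ⟨hsum, ?_⟩
    set A : ℝ := 1 + ∑' n : ℕ, b (n + 1) * r ^ (n + 1) with hAdef
    set B : ℝ := ∑' n : ℕ, ((n : ℝ) + 1) * b (n + 1) * r ^ (n + 1) with hBdef
    have hA1 : 1 ≤ A := by
      rw [hAdef]
      have : 0 ≤ ∑' n : ℕ, b (n + 1) * r ^ (n + 1) :=
        tsum_nonneg fun n => mul_nonneg (hb' n) (by positivity)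
      linarith
    have hApos : 0 < A := by linarith
    have hAC : pw f μ (r : ℂ) = (A : ℂ) := by
      have h1 := hrepr (r : ℂ) hrD
      have h2 : HasSum (fun n : ℕ => (b (n + 1) : ℂ) * (r : ℂ) ^ (n + 1)) ((A - 1 : ℝ) : ℂ) := by
        have h3' : HasSum (fun n : ℕ => b (n + 1) * r ^ (n + 1)) (A - 1) := by
          have : A - 1 = ∑' n : ℕ, b (n + 1) * r ^ (n + 1) := by rw [hAdef]; ring
          rw [this]
          exact hs2.hasSum
        have h3 := Complex.ofRealCLM.hasSum h3'
        have hfeq2 : (fun n : ℕ => (b (n + 1) : ℂ) * (r : ℂ) ^ (n + 1)) =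
            fun n : ℕ => Complex.ofRealCLM (b (n + 1) * r ^ (n + 1)) := by
          funext n
          simp only [Complex.ofRealCLM_apply]
          push_cast
          ring
        rw [hfeq2]
        exact h3
      have h4 := h1.unique h2
      have : pw f μ (r : ℂ) = 1 + ((A - 1 : ℝ) : ℂ) := by linear_combination h4
      rw [this]
      push_cast
      ring
    have hBC : (r : ℂ) * S' (r : ℂ) = (B : ℂ) := by
      have h3 := Complex.ofRealCLM.hasSum hs1.hasSum
      have h4 : HasSum (fun n : ℕ => (r : ℂ) * ((b (n + 1) : ℂ) * ((n : ℂ) + 1) * (r : ℂ) ^ n))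
          ((B : ℝ) : ℂ) := by
        have hfeq3 : (fun n : ℕ => (r : ℂ) * ((b (n + 1) : ℂ) * ((n : ℂ) + 1) * (r : ℂ) ^ n)) =
            fun n : ℕ => Complex.ofRealCLM (((n : ℝ) + 1) * b (n + 1) * r ^ (n + 1)) := by
          funext n
          simp only [Complex.ofRealCLM_apply]
          push_cast
          ring
        rw [hfeq3]
        exact h3
      rw [hS'def]
      rw [← tsum_mul_left]
      exact h4.tsum_eq
    have hk := hkey (r : ℂ) hrD hrne
    have hk2 : (B : ℂ) * f (r : ℂ) = (μ : ℂ) * (A : ℂ) * (f (r : ℂ) - (r : ℂ) * deriv f (r : ℂ)) := by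
      rw [← hBC, ← hAC]
      linear_combination hk
    have hzr := hstar (r : ℂ) hrD
    rw [zRatio, if_neg hrne] at hzr
    have hAne : (A : ℂ) ≠ 0 := by
      simpa using hApos.ne'
    have hx : ((B / A : ℝ) : ℂ) = (μ : ℂ) * (1 - (r : ℂ) * deriv f (r : ℂ) / f (r : ℂ)) := by
      push_cast
      field_simp
      linear_combination hk2
    have hre : B / A = μ * (1 - ((r : ℂ) * deriv f (r : ℂ) / f (r : ℂ)).re) := by
      have h5 := congrArg Complex.re hx
      rw [Complex.ofReal_re] at h5
      rw [h5]
      simp [Complex.re_ofReal_mul]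
    have hBA : B / A ≤ c := by
      rw [hre, hcdef]
      have h6 := hzr
      nlinarith
    have hBle : B ≤ c * A := by
      rw [div_le_iff₀ hApos] at hBA
      linarith
    have hts : ∑' n : ℕ, (((n : ℝ) + 1) - c) * b (n + 1) * r ^ (n + 1) = B - c * (A - 1) := by
      rw [hsplit, hs1.tsum_sub (hs2.mul_left c), tsum_mul_left]
      rw [hBdef, hAdef]
      ring
    rw [hts]
    nlinarith
  obtain ⟨hSummable, hle⟩ := aux_limit c hc (fun n => b (n + 1)) hb'
    (fun r h0 h1 => (hmain r h0 h1).1) (fun r h0 h1 => (hmain r h0 h1).2)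
  refine ⟨⟨hSummable, hle⟩, ?_⟩
  intro hμ1
  refine ⟨⟨hfA, hf0, hder1⟩, hfnz, ?_⟩
  intro z hz
  by_cases hz0 : z = 0
  · subst hz0
    rw [if_pos rfl, hder1]
    simp
    linarith
  · rw [if_neg hz0]
    have hfz := hfnz z hz hz0
    have hzn : ‖z‖ < 1 := (hmem z).1 hz
    have hμne : (μ : ℂ) ≠ 0 := by exact_mod_cast hμ.ne'
    have hs2' : Summable (fun n : ℕ => (b (n + 1) : ℂ) * ((n : ℂ) + 1) * z ^ n) := by
      apply Summable.of_norm
      have hnorm : (fun n : ℕ => ‖(b (n + 1) : ℂ) * ((n : ℂ) + 1) * z ^ n‖) =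
          fun n : ℕ => ((n : ℝ) + 1) * b (n + 1) * ‖z‖ ^ n := by
        funext n
        rw [norm_mul, norm_mul, norm_pow]
        rw [Complex.norm_real, Real.norm_eq_abs, _root_.abs_of_nonneg (hb' n)]
        have h1 : ‖((n : ℂ) + 1)‖ = (n : ℝ) + 1 := by norm_cast
        rw [h1]
        ring
      rw [hnorm]
      exact aux_deriv_summable _ hb' hconv ‖z‖ (norm_nonneg z) hzn
    have hS'sum : HasSum (fun n : ℕ => (b (n + 1) : ℂ) * ((n : ℂ) + 1) * z ^ n) (S' z) :=
      hs2'.hasSum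
    have h1 := hrepr z hz
    have hcomb := h1.sub (hS'sum.mul_left (z / (μ : ℂ)))
    have hid : deriv f z * (z / f z) ^ ((μ : ℂ) + 1) - 1 =
        (pw f μ z - 1) - (z / (μ : ℂ)) * S' z := by
      have hk := hkey z hz hz0
      have hpw : pw f μ z = (z / f z) ^ (μ : ℂ) := by rw [pw, if_neg hz0]
      have hcp : (z / f z) ^ ((μ : ℂ) + 1) = (z / f z) ^ (μ : ℂ) * (z / f z) := by
        rw [Complex.cpow_add _ _ (div_ne_zero hz0 hfz), Complex.cpow_one]
      rw [hcp, ← hpw]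
      field_simp
      linear_combination hk
    rw [show deriv f z * (z / f z) ^ ((μ : ℂ) + 1) - 1 = _ from hid]
    -- now bound the modulus of the sum
    set d : ℕ → ℝ := fun n => (((n : ℝ) + 1) / μ - 1) * b (n + 1) with hddef
    have hn1 : ∀ n : ℕ, (1 : ℝ) ≤ (n : ℝ) + 1 := by
      intro n
      have h0 : (0 : ℝ) ≤ (n : ℝ) := Nat.cast_nonneg n
      linarith
    have hd_nonneg : ∀ n, 0 ≤ d n := by
      intro n
      have h2 : (0 : ℝ) ≤ ((n : ℝ) + 1) / μ - 1 := by
        rw [sub_nonneg, le_div_iff₀ hμ, one_mul]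
        linarith [hn1 n]
      simp only [hddef]
      exact mul_nonneg h2 (hb' n)
    have hd_le : ∀ n, d n ≤ (1 / μ) * ((((n : ℝ) + 1) - c) * b (n + 1)) := by
      intro n
      have h3 : d n = 1 / μ * ((((n : ℝ) + 1) - μ) * b (n + 1)) := by
        simp only [hddef]
        field_simp
      rw [h3]
      apply mul_le_mul_of_nonneg_left _ (by positivity : (0 : ℝ) ≤ 1 / μ)
      apply mul_le_mul_of_nonneg_right _ (hb' n)
      linarith
    have hd_sum : Summable d :=
      Summable.of_nonneg_of_le hd_nonneg hd_le (hSummable.mul_left (1 / μ))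
    have hd_tsum : ∑' n, d n ≤ 1 - α := by
      have h3 : ∑' n, d n ≤ ∑' n : ℕ, (1 / μ) * ((((n : ℝ) + 1) - c) * b (n + 1)) :=
        hd_sum.tsum_le_tsum hd_le (hSummable.mul_left (1 / μ))
      have h4 : ∑' n : ℕ, (1 / μ) * ((((n : ℝ) + 1) - c) * b (n + 1)) =
          (1 / μ) * ∑' n : ℕ, (((n : ℝ) + 1) - c) * b (n + 1) := tsum_mul_left
      have h5 : (1 / μ) * ∑' n : ℕ, (((n : ℝ) + 1) - c) * b (n + 1) ≤ (1 / μ) * c := by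
        apply mul_le_mul_of_nonneg_left _ (by positivity)
        exact hle
      have h6 : (1 / μ) * c = 1 - α := by
        rw [hcdef]
        field_simp
      linarith
    -- norms of the terms
    have hFnorm : ∀ n : ℕ, ‖(b (n + 1) : ℂ) * z ^ (n + 1) -
        (z / (μ : ℂ)) * ((b (n + 1) : ℂ) * ((n : ℂ) + 1) * z ^ n)‖ ≤ d n := by
      intro n
      have hFeq : (b (n + 1) : ℂ) * z ^ (n + 1) -
          (z / (μ : ℂ)) * ((b (n + 1) : ℂ) * ((n : ℂ) + 1) * z ^ n) =
          (((1 - ((n : ℝ) + 1) / μ : ℝ)) : ℂ) * (b (n + 1) : ℂ) * z ^ (n + 1) := by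
        push_cast
        field_simp
        ring
      rw [hFeq]
      rw [norm_mul, norm_mul, norm_pow]
      rw [Complex.norm_real, Real.norm_eq_abs, Complex.norm_real, Real.norm_eq_abs,
        _root_.abs_of_nonneg (hb' n)]
      have habs1 : |1 - ((n : ℝ) + 1) / μ| = ((n : ℝ) + 1) / μ - 1 := by
        rw [abs_of_nonpos]
        · ring
        · rw [sub_nonpos, le_div_iff₀ hμ, one_mul]
          linarith [hn1 n]
      rw [habs1]
      rw [hddef]
      calc (((n : ℝ) + 1) / μ - 1) * b (n + 1) * ‖z‖ ^ (n + 1) ≤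
          (((n : ℝ) + 1) / μ - 1) * b (n + 1) * 1 := by
            apply mul_le_mul_of_nonneg_left _ _
            · exact pow_le_one₀ (norm_nonneg z) hzn.le
            · have := hd_nonneg n
              rw [hddef] at this
              exact this
        _ = (((n : ℝ) + 1) / μ - 1) * b (n + 1) := by ring
    have hnormsum : Summable (fun n : ℕ => ‖(b (n + 1) : ℂ) * z ^ (n + 1) -
        (z / (μ : ℂ)) * ((b (n + 1) : ℂ) * ((n : ℂ) + 1) * z ^ n)‖) :=
      Summable.of_nonneg_of_le (fun n => norm_nonneg _) hFnorm hd_sum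
    calc ‖(pw f μ z - 1) - (z / (μ : ℂ)) * S' z‖ ≤ ∑' n : ℕ, ‖(b (n + 1) : ℂ) * z ^ (n + 1) -
          (z / (μ : ℂ)) * ((b (n + 1) : ℂ) * ((n : ℂ) + 1) * z ^ n)‖ := by
          rw [← hcomb.tsum_eq]
          exact norm_tsum_le_tsum_norm hnormsum
      _ ≤ ∑' n, d n := hnormsum.tsum_le_tsum hFnorm hd_sum
      _ ≤ 1 - α := hd_tsum
end
end

section
/- Let 0 ≤ α < 1 and let f(z) = z − Σ_{n=2}^∞ c_n z^n with c_n ≥ 0 for all n ≥ 2 be analytic on 𝔻. If f ∈ 𝒮*(α), then f ∈ 𝒰(1−α, 1), i.e. |f'(z)(z/f(z))² − 1| ≤ 1 − α for all z ∈ 𝔻. -/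
open Complex Metric Set

noncomputable section

private lemma auxGeoSummable {u : ℝ} (hu0 : 0 ≤ u) (hu1 : u < 1) :
    Summable (fun n : ℕ => ((n : ℝ) + 2) * u ^ (n + 1)) := by
  have h1 : Summable (fun n : ℕ => (n : ℝ) ^ 1 * u ^ n) :=
    summable_pow_mul_geometric_of_norm_lt_one 1
      (by rwa [Real.norm_eq_abs, _root_.abs_of_nonneg hu0])
  have h2 : Summable (fun n : ℕ => u ^ n) := summable_geometric_of_lt_one hu0 hu1
  have h3 := (h1.add (h2.mul_left 2)).mul_left u
  refine h3.congr fun n => ?_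
  ring

private lemma auxSummableB {c : ℕ → ℝ} (hc : ∀ n, 2 ≤ n → 0 ≤ c n)
    (hS : ∀ t : ℝ, 0 ≤ t → t < 1 → Summable (fun n : ℕ => c (n + 2) * t ^ (n + 2)))
    {t : ℝ} (ht0 : 0 ≤ t) (ht1 : t < 1) :
    Summable (fun n : ℕ => ((n : ℝ) + 2) * c (n + 2) * t ^ (n + 1)) := by
  set s : ℝ := (1 + t) / 2 with hs
  clear_value s
  have hs0 : 0 < s := by rw [hs]; linarith
  have hts : t < s := by rw [hs]; linarith
  have hs1 : s < 1 := by rw [hs]; linarith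
  have hSs := hS s hs0.le hs1
  set M : ℝ := ∑' n : ℕ, c (n + 2) * s ^ (n + 2) with hM
  have hterm : ∀ n : ℕ, c (n + 2) * s ^ (n + 2) ≤ M := fun n =>
    Summable.le_tsum hSs n fun j _ =>
      mul_nonneg (hc _ (Nat.le_add_left 2 j)) (pow_nonneg hs0.le _)
  have hgeo := (auxGeoSummable (div_nonneg ht0 hs0.le)
    ((div_lt_one hs0).mpr hts)).mul_left (M / s)
  refine Summable.of_nonneg_of_le (fun n => ?_) (fun n => ?_) hgeo
  · exact mul_nonneg (mul_nonneg (by positivity) (hc _ (Nat.le_add_left 2 n)))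
      (pow_nonneg ht0 _)
  · have hcn : 0 ≤ c (n + 2) := hc _ (Nat.le_add_left 2 n)
    have h1 : c (n + 2) ≤ M / s ^ (n + 2) := (le_div_iff₀ (by positivity)).mpr (hterm n)
    calc ((n : ℝ) + 2) * c (n + 2) * t ^ (n + 1)
        = (((n : ℝ) + 2) * t ^ (n + 1)) * c (n + 2) := by ring
      _ ≤ (((n : ℝ) + 2) * t ^ (n + 1)) * (M / s ^ (n + 2)) := by
          apply mul_le_mul_of_nonneg_left h1 (by positivity)
      _ = M / s * (((n : ℝ) + 2) * (t / s) ^ (n + 1)) := by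
          rw [div_pow]; field_simp; ring

private lemma auxRepr {f : ℂ → ℂ} {c : ℕ → ℝ}
    (hrepr : ∀ z ∈ unitDisk,
      HasSum (fun n : ℕ => (c (n + 2) : ℂ) * z ^ (n + 2)) (z - f z))
    {w : ℂ} (hw : w ∈ unitDisk) :
    f w = w * (1 - ∑' n : ℕ, (c (n + 2) : ℂ) * w ^ (n + 1)) := by
  have h := (hrepr w hw).tsum_eq
  have h2 : ∑' n : ℕ, (c (n + 2) : ℂ) * w ^ (n + 2)
      = w * ∑' n : ℕ, (c (n + 2) : ℂ) * w ^ (n + 1) := by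
    rw [← tsum_mul_left]
    exact tsum_congr fun n => by ring
  rw [h2] at h
  linear_combination h

private lemma auxDeriv {f : ℂ → ℂ} {c : ℕ → ℝ} (hc : ∀ n, 2 ≤ n → 0 ≤ c n)
    (hS : ∀ t : ℝ, 0 ≤ t → t < 1 → Summable (fun n : ℕ => c (n + 2) * t ^ (n + 2)))
    (hrepr : ∀ z ∈ unitDisk,
      HasSum (fun n : ℕ => (c (n + 2) : ℂ) * z ^ (n + 2)) (z - f z))
    {w : ℂ} (hw : w ∈ unitDisk) :
    HasDerivAt f (1 - ∑' n : ℕ, ((n : ℂ) + 2) * (c (n + 2) : ℂ) * w ^ (n + 1)) w := by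
  have hw1 : ‖w‖ < 1 := mem_ball_zero_iff.mp hw
  set R : ℝ := (‖w‖ + 1) / 2 with hR
  have hR0 : 0 < R := by rw [hR]; positivity
  have hwR : ‖w‖ < R := by rw [hR]; linarith
  have hR1 : R < 1 := by rw [hR]; linarith
  clear_value R
  have hu : Summable (fun n : ℕ => ((n : ℝ) + 2) * c (n + 2) * R ^ (n + 1)) :=
    auxSummableB hc hS hR0.le hR1
  have hgderiv : ∀ (n : ℕ), ∀ y ∈ Metric.ball (0 : ℂ) R,
      HasDerivAt (fun y : ℂ => (c (n + 2) : ℂ) * y ^ (n + 2))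
        (((n : ℂ) + 2) * (c (n + 2) : ℂ) * y ^ (n + 1)) y := by
    intro n y _
    have h := (hasDerivAt_pow (n + 2) y).const_mul ((c (n + 2) : ℂ))
    refine h.congr_deriv ?_
    simp only [show n + 2 - 1 = n + 1 from rfl]
    push_cast
    ring
  have hbound : ∀ (n : ℕ), ∀ y ∈ Metric.ball (0 : ℂ) R,
      ‖((n : ℂ) + 2) * (c (n + 2) : ℂ) * y ^ (n + 1)‖
        ≤ ((n : ℝ) + 2) * c (n + 2) * R ^ (n + 1) := by
    intro n y hy
    rw [mem_ball_zero_iff] at hy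
    have hcn : 0 ≤ c (n + 2) := hc _ (Nat.le_add_left 2 n)
    have h1 : ‖((n : ℂ) + 2)‖ = (n : ℝ) + 2 := by
      rw [show ((n : ℂ) + 2) = (((n + 2 : ℕ)) : ℂ) by push_cast; ring, Complex.norm_natCast]
      push_cast; ring
    rw [norm_mul, norm_mul, norm_pow, h1, Complex.norm_real, Real.norm_eq_abs,
      _root_.abs_of_nonneg hcn]
    gcongr
  have hg0 : Summable (fun n : ℕ => (c (n + 2) : ℂ) * (0 : ℂ) ^ (n + 2)) := by
    refine summable_zero.congr fun n => ?_
    simp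
  have hts := hasDerivAt_tsum_of_isPreconnected hu Metric.isOpen_ball
    (convex_ball (0 : ℂ) R).isPreconnected hgderiv hbound
    (mem_ball_self hR0) hg0 (mem_ball_zero_iff.mpr hwR)
  have hF : HasDerivAt (fun z : ℂ => z - ∑' n : ℕ, (c (n + 2) : ℂ) * z ^ (n + 2))
      (1 - ∑' n : ℕ, ((n : ℂ) + 2) * (c (n + 2) : ℂ) * w ^ (n + 1)) w :=
    (hasDerivAt_id w).sub hts
  apply hF.congr_of_eventuallyEq
  have hwD : w ∈ Metric.ball (0 : ℂ) 1 := hw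
  filter_upwards [Metric.isOpen_ball.mem_nhds hwD] with y hy
  linear_combination (hrepr y hy).tsum_eq


/-- starlike functions of order `α` with negative coefficients
belong to `𝒰(1-α, 1)`. -/
theorem stmt9 (α : ℝ) (hα₀ : 0 ≤ α) (hα₁ : α < 1)
    (f : ℂ → ℂ) (c : ℕ → ℝ) (hc : ∀ n, 2 ≤ n → 0 ≤ c n)
    (hrepr : ∀ z ∈ unitDisk,
      HasSum (fun n : ℕ => (c (n + 2) : ℂ) * z ^ (n + 2)) (z - f z))
    (hf : InSstar f α) :
    InU f (1 - α) 1 := by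
  obtain ⟨⟨⟨hAn, hf0, hd0⟩, hinj⟩, hstar⟩ := hf
  have h0mem : (0 : ℂ) ∈ unitDisk := by
    show (0 : ℂ) ∈ Metric.ball 0 1
    simp
  have hne : ∀ z ∈ unitDisk, z ≠ 0 → f z ≠ 0 := by
    intro z hz hz0 hfz
    exact hz0 (hinj hz h0mem (by rw [hfz, hf0]))
  have hmem : ∀ t : ℝ, 0 ≤ t → t < 1 → (t : ℂ) ∈ unitDisk := by
    intro t ht0 ht1
    show (t : ℂ) ∈ Metric.ball 0 1
    rw [mem_ball_zero_iff, Complex.norm_real, Real.norm_eq_abs, _root_.abs_of_nonneg ht0]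
    exact ht1
  have hS : ∀ t : ℝ, 0 ≤ t → t < 1 → Summable (fun n : ℕ => c (n + 2) * t ^ (n + 2)) := by
    intro t ht0 ht1
    have hsum := (hrepr _ (hmem t ht0 ht1)).summable
    exact summable_ofReal.mp (hsum.congr fun n => by push_cast; ring)
  -- summability of the real coefficient series (exponent n+1 versions)
  have hSB : ∀ t : ℝ, 0 ≤ t → t < 1 →
      Summable (fun n : ℕ => ((n : ℝ) + 2) * c (n + 2) * t ^ (n + 1)) :=
    fun t ht0 ht1 => auxSummableB hc hS ht0 ht1
  have hSA : ∀ t : ℝ, 0 ≤ t → t < 1 → Summable (fun n : ℕ => c (n + 2) * t ^ (n + 1)) := by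
    intro t ht0 ht1
    refine Summable.of_nonneg_of_le (fun n => ?_) (fun n => ?_) (hSB t ht0 ht1)
    · exact mul_nonneg (hc _ (Nat.le_add_left 2 n)) (pow_nonneg ht0 _)
    · have := mul_nonneg (hc (n + 2) (Nat.le_add_left 2 n)) (pow_nonneg ht0 (n + 1))
      nlinarith [Nat.cast_nonneg (α := ℝ) n]
  have hSC : ∀ t : ℝ, 0 ≤ t → t < 1 →
      Summable (fun n : ℕ => (n : ℝ) * c (n + 2) * t ^ (n + 1)) := by
    intro t ht0 ht1
    refine Summable.of_nonneg_of_le (fun n => ?_) (fun n => ?_) (hSB t ht0 ht1)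
    · exact mul_nonneg (mul_nonneg (Nat.cast_nonneg n) (hc _ (Nat.le_add_left 2 n)))
        (pow_nonneg ht0 _)
    · have := mul_nonneg (hc (n + 2) (Nat.le_add_left 2 n)) (pow_nonneg ht0 (n + 1))
      nlinarith [Nat.cast_nonneg (α := ℝ) n]
  refine ⟨⟨hAn, hf0, hd0⟩, hne, ?_⟩
  intro z hzD
  by_cases hz0 : z = 0
  · subst hz0
    rw [if_pos rfl, hd0, mul_one, sub_self, norm_zero]
    linarith
  rw [if_neg hz0]
  have h2e : (((1 : ℝ) : ℂ) + 1) = ((2 : ℕ) : ℂ) := by norm_num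
  rw [h2e, Complex.cpow_natCast]
  have hz1 : ‖z‖ < 1 := mem_ball_zero_iff.mp hzD
  have hr0 : 0 < ‖z‖ := norm_pos_iff.mpr hz0
  set r : ℝ := ‖z‖ with hrdef
  -- real sums
  set At : ℝ := ∑' n : ℕ, c (n + 2) * r ^ (n + 1) with hAtdef
  set Bt : ℝ := ∑' n : ℕ, ((n : ℝ) + 2) * c (n + 2) * r ^ (n + 1) with hBtdef
  set Ct : ℝ := ∑' n : ℕ, (n : ℝ) * c (n + 2) * r ^ (n + 1) with hCtdef
  have hAt0 : 0 ≤ At :=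
    tsum_nonneg fun n => mul_nonneg (hc _ (Nat.le_add_left 2 n)) (pow_nonneg hr0.le _)
  have hCt0 : 0 ≤ Ct := tsum_nonneg fun n =>
    mul_nonneg (mul_nonneg (Nat.cast_nonneg n) (hc _ (Nat.le_add_left 2 n)))
      (pow_nonneg hr0.le _)
  have hBt_split : Bt = Ct + 2 * At := by
    rw [hBtdef, tsum_congr (g := fun n : ℕ =>
        (n : ℝ) * c (n + 2) * r ^ (n + 1) + 2 * (c (n + 2) * r ^ (n + 1)))
      (fun n => by ring), Summable.tsum_add (hSC r hr0.le hz1) ((hSA r hr0.le hz1).mul_left 2),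
      tsum_mul_left]
  -- complex sums
  have hSAz : Summable (fun n : ℕ => (c (n + 2) : ℂ) * z ^ (n + 1)) := by
    refine Summable.of_norm (((hSA r hr0.le hz1)).congr fun n => ?_)
    rw [norm_mul, norm_pow, Complex.norm_real, Real.norm_eq_abs,
      _root_.abs_of_nonneg (hc _ (Nat.le_add_left 2 n))]
  have hSCz : Summable (fun n : ℕ => (n : ℂ) * (c (n + 2) : ℂ) * z ^ (n + 1)) := by
    refine Summable.of_norm (((hSC r hr0.le hz1)).congr fun n => ?_)
    rw [norm_mul, norm_mul, norm_pow, Complex.norm_natCast, Complex.norm_real,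
      Real.norm_eq_abs, _root_.abs_of_nonneg (hc _ (Nat.le_add_left 2 n))]
  set Az : ℂ := ∑' n : ℕ, (c (n + 2) : ℂ) * z ^ (n + 1) with hAzdef
  set Cz : ℂ := ∑' n : ℕ, (n : ℂ) * (c (n + 2) : ℂ) * z ^ (n + 1) with hCzdef
  have hBz_split : ∑' n : ℕ, ((n : ℂ) + 2) * (c (n + 2) : ℂ) * z ^ (n + 1)
      = Cz + 2 * Az := by
    rw [tsum_congr (g := fun n : ℕ =>
        (n : ℂ) * (c (n + 2) : ℂ) * z ^ (n + 1) + 2 * ((c (n + 2) : ℂ) * z ^ (n + 1)))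
      (fun n => by ring), Summable.tsum_add hSCz (hSAz.mul_left 2), tsum_mul_left, hAzdef, hCzdef]
  have hAz_le : ‖Az‖ ≤ At := by
    refine le_trans (norm_tsum_le_tsum_norm ?_) (le_of_eq ?_)
    · refine ((hSA r hr0.le hz1)).congr fun n => ?_
      rw [norm_mul, norm_pow, Complex.norm_real, Real.norm_eq_abs,
        _root_.abs_of_nonneg (hc _ (Nat.le_add_left 2 n))]
    · exact tsum_congr fun n => by
        rw [norm_mul, norm_pow, Complex.norm_real, Real.norm_eq_abs,
          _root_.abs_of_nonneg (hc _ (Nat.le_add_left 2 n))]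
  have hCz_le : ‖Cz‖ ≤ Ct := by
    refine le_trans (norm_tsum_le_tsum_norm ?_) (le_of_eq ?_)
    · refine ((hSC r hr0.le hz1)).congr fun n => ?_
      rw [norm_mul, norm_mul, norm_pow, Complex.norm_natCast, Complex.norm_real,
        Real.norm_eq_abs, _root_.abs_of_nonneg (hc _ (Nat.le_add_left 2 n))]
    · exact tsum_congr fun n => by
        rw [norm_mul, norm_mul, norm_pow, Complex.norm_natCast, Complex.norm_real,
          Real.norm_eq_abs, _root_.abs_of_nonneg (hc _ (Nat.le_add_left 2 n))]
  have hdz : deriv f z = 1 - (Cz + 2 * Az) := by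
    rw [(auxDeriv hc hS hrepr hzD).deriv, hBz_split]
  have hfz : f z = z * (1 - Az) := auxRepr hrepr hzD
  have h1Az : (1 : ℂ) - Az ≠ 0 := by
    intro h
    exact hne z hzD hz0 (by rw [hfz, h, mul_zero])
  -- representation at real points
  have hreal : ∀ x : ℝ, 0 ≤ x → x < 1 →
      f (x : ℂ) = ((x * (1 - ∑' n : ℕ, c (n + 2) * x ^ (n + 1)) : ℝ) : ℂ) := by
    intro x hx0 hx1
    rw [auxRepr hrepr (hmem x hx0 hx1)]
    rw [Complex.ofReal_mul, Complex.ofReal_sub, Complex.ofReal_one, Complex.ofReal_tsum]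
    congr 2
    exact tsum_congr fun n => by push_cast; ring
  have hρD : (r : ℂ) ∈ unitDisk := hmem r hr0.le hz1
  have hρ0 : (r : ℂ) ≠ 0 := Complex.ofReal_ne_zero.mpr hr0.ne'
  have hfρ : f (r : ℂ) = ((r * (1 - At) : ℝ) : ℂ) := hreal r hr0.le hz1
  have hBρ : ∑' n : ℕ, ((n : ℂ) + 2) * (c (n + 2) : ℂ) * (r : ℂ) ^ (n + 1) = ((Bt : ℝ) : ℂ) := by
    rw [hBtdef, Complex.ofReal_tsum]
    exact tsum_congr fun n => by push_cast; ring
  have hdρ : deriv f (r : ℂ) = ((1 - Bt : ℝ) : ℂ) := by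
    rw [(auxDeriv hc hS hrepr hρD).deriv, hBρ]
    push_cast
    ring
  have h1At_ne : (1 : ℝ) - At ≠ 0 := by
    intro h
    apply hne _ hρD hρ0
    rw [hfρ, h]
    simp
  -- positivity of 1 - At via the intermediate value theorem
  have h1At : 0 < 1 - At := by
    rcases h1At_ne.lt_or_gt with hcon | h
    · exfalso
      have hAt1 : 1 < At := by linarith
      set t₀ : ℝ := r / (2 * (At + 1)) with ht₀def
      clear_value t₀
      have ht₀pos : 0 < t₀ := by rw [ht₀def]; positivity
      have ht₀r : t₀ < r := by
        rw [ht₀def, div_lt_iff₀ (by positivity)]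
        nlinarith
      have ht₀1 : t₀ < 1 := lt_trans ht₀r hz1
      have hA₀le : (∑' n : ℕ, c (n + 2) * t₀ ^ (n + 1)) ≤ (t₀ / r) * At := by
        rw [hAtdef, ← tsum_mul_left]
        refine Summable.tsum_le_tsum (fun n => ?_) (hSA t₀ ht₀pos.le ht₀1)
          ((hSA r hr0.le hz1).mul_left _)
        have hcn : 0 ≤ c (n + 2) := hc _ (Nat.le_add_left 2 n)
        have hdiv0 : 0 ≤ t₀ / r := div_nonneg ht₀pos.le hr0.le
        have hdiv1 : t₀ / r ≤ 1 := (div_le_one hr0).mpr ht₀r.le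
        have h1 : t₀ ^ (n + 1) ≤ (t₀ / r) * r ^ (n + 1) := by
          calc t₀ ^ (n + 1) = (t₀ / r) ^ (n + 1) * r ^ (n + 1) := by
                rw [div_pow, div_mul_cancel₀ _ (pow_ne_zero _ hr0.ne')]
            _ ≤ (t₀ / r) * r ^ (n + 1) :=
                mul_le_mul_of_nonneg_right
                  (pow_le_of_le_one hdiv0 hdiv1 (Nat.succ_ne_zero n))
                  (pow_nonneg hr0.le _)
        calc c (n + 2) * t₀ ^ (n + 1) ≤ c (n + 2) * ((t₀ / r) * r ^ (n + 1)) :=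
              mul_le_mul_of_nonneg_left h1 hcn
          _ = t₀ / r * (c (n + 2) * r ^ (n + 1)) := by ring
      have hA₀lt1 : (∑' n : ℕ, c (n + 2) * t₀ ^ (n + 1)) < 1 := by
        have h2A : (0:ℝ) < 2 * (At + 1) := by positivity
        have e : t₀ / r * At = At / (2 * (At + 1)) := by
          rw [ht₀def]
          field_simp
        have h1 : (t₀ / r) * At < 1 := by
          rw [e, div_lt_one h2A]
          nlinarith
        linarith
      have hcont : ContinuousOn (fun t : ℝ => (f ((t : ℝ) : ℂ)).re) (Icc t₀ r) := by
        apply Complex.continuous_re.comp_continuousOn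
        apply (hAn.continuousOn).comp Complex.continuous_ofReal.continuousOn
        intro x hx
        exact hmem x (le_trans ht₀pos.le hx.1) (lt_of_le_of_lt hx.2 hz1)
      have hIVT := intermediate_value_Icc' ht₀r.le hcont
      have h0mem' : (0 : ℝ) ∈ Icc ((f ((r : ℝ) : ℂ)).re) ((f ((t₀ : ℝ) : ℂ)).re) := by
        constructor
        · rw [hfρ, Complex.ofReal_re]
          nlinarith
        · rw [hreal t₀ ht₀pos.le ht₀1, Complex.ofReal_re]
          nlinarith
      obtain ⟨x, hxmem, hx0⟩ := hIVT h0mem'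
      have hx0'' : (f ((x : ℝ) : ℂ)).re = 0 := hx0
      have hx0' : f ((x : ℝ) : ℂ) = 0 := by
        rw [hreal x (le_trans ht₀pos.le hxmem.1) (lt_of_le_of_lt hxmem.2 hz1)] at hx0'' ⊢
        rw [Complex.ofReal_re] at hx0''
        rw [hx0'']
        simp
      exact hne _ (hmem x (le_trans ht₀pos.le hxmem.1) (lt_of_le_of_lt hxmem.2 hz1))
        (Complex.ofReal_ne_zero.mpr (lt_of_lt_of_le ht₀pos hxmem.1).ne') hx0'
    · exact h
  -- starlikeness at the real point r
  have hq : α < (1 - Bt) / (1 - At) := by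
    have hst := hstar (r : ℂ) hρD
    have h1 : ((1 - At : ℝ) : ℂ) ≠ 0 := Complex.ofReal_ne_zero.mpr h1At_ne
    have hzr : zRatio f (r : ℂ) = (((1 - Bt) / (1 - At) : ℝ) : ℂ) := by
      rw [zRatio, if_neg hρ0, hdρ, hfρ]
      push_cast at h1 ⊢
      field_simp
    rwa [hzr, Complex.ofReal_re] at hst
  -- the key real inequality
  have hCt_eq : Ct = Bt - 2 * At := by linarith
  have hkey : (At ^ 2 + Ct) / (1 - At) ^ 2 ≤ 1 - α := by
    rw [div_le_iff₀ (by positivity)]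
    have hq' : α * (1 - At) < 1 - Bt := (lt_div_iff₀ h1At).mp hq
    nlinarith [mul_nonneg (mul_nonneg hα₀ h1At.le) hAt0]
  -- the complex identity
  have hUid : deriv f z * (z / f z) ^ (2 : ℕ) - 1 = -((Az ^ 2 + Cz) / (1 - Az) ^ 2) := by
    rw [hdz, hfz]
    field_simp
    ring
  rw [hUid, norm_neg, norm_div, norm_pow]
  calc ‖Az ^ 2 + Cz‖ / ‖1 - Az‖ ^ 2 ≤ (At ^ 2 + Ct) / (1 - At) ^ 2 := by
        apply div_le_div₀ (by positivity) ?_ (by positivity) ?_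
        · calc ‖Az ^ 2 + Cz‖ ≤ ‖Az ^ 2‖ + ‖Cz‖ := norm_add_le _ _
            _ = ‖Az‖ ^ 2 + ‖Cz‖ := by rw [norm_pow]
            _ ≤ At ^ 2 + Ct :=
              add_le_add (pow_le_pow_left₀ (norm_nonneg _) hAz_le 2) hCz_le
        · apply pow_le_pow_left₀ h1At.le
          calc 1 - At ≤ 1 - ‖Az‖ := by linarith
            _ = ‖(1 : ℂ)‖ - ‖Az‖ := by rw [norm_one]
            _ ≤ ‖1 - Az‖ := norm_sub_norm_le _ _
    _ ≤ 1 - α := hkey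
end
end

section
/- Let 2/3 < β ≤ 1 and f ∈ ℱ_β. Then ‖f‖ ≤ 2(3β − 2), i.e. (1 − |z|²)|f''(z)/f'(z)| ≤ 2(3β − 2) for all z ∈ 𝔻. -/
open Complex Metric Set

noncomputable section

/-- `f ∈ ℱ_β`: `f ∈ 𝒜`, locally univalent, with `Re(1 + z f''(z)/f'(z)) < (3/2) β`. -/
def InF (f : ℂ → ℂ) (β : ℝ) : Prop :=
  InA f ∧ ∀ z ∈ unitDisk, deriv f z ≠ 0 ∧
    (1 + z * deriv (deriv f) z / deriv f z).re < 3 / 2 * β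

/-- pre-Schwarzian norm estimate for `ℱ_β`. -/
theorem stmt10 (β : ℝ) (hβ₁ : 2 / 3 < β) (hβ₂ : β ≤ 1)
    (f : ℂ → ℂ) (hf : InF f β) :
    ∀ z ∈ unitDisk,
      (1 - ‖z‖ ^ 2) * ‖deriv (deriv f) z / deriv f z‖
        ≤ 2 * (3 * β - 2) := by
  obtain ⟨⟨hA, hf0, hf1⟩, hB⟩ := hf
  set c : ℝ := (3 * β - 2) / 2 with hc
  have hcpos : 0 < c := by rw [hc]; linarith
  set w : ℂ → ℂ := fun z => z * deriv (deriv f) z / deriv f z with hw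
  have hf'A : AnalyticOnNhd ℂ (deriv f) unitDisk := hA.deriv
  have hf''A : AnalyticOnNhd ℂ (deriv (deriv f)) unitDisk := hf'A.deriv
  have hwA : AnalyticOnNhd ℂ w unitDisk :=
    (analyticOnNhd_id.mul hf''A).div hf'A (fun z hz => (hB z hz).1)
  have hre : ∀ z ∈ unitDisk, (w z).re < c := by
    intro z hz
    have h2 := (hB z hz).2
    have h1 : (1 + z * deriv (deriv f) z / deriv f z).re = 1 + (w z).re := by
      simp [hw, Complex.add_re]
    rw [h1] at h2
    rw [hc]; linarith
  have hne : ∀ z ∈ unitDisk, 2 * (c : ℂ) - w z ≠ 0 := by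
    intro z hz h0
    have h3 := congrArg Complex.re h0
    simp [Complex.sub_re, Complex.mul_re] at h3
    have := hre z hz
    linarith
  set g : ℂ → ℂ := fun z => w z / (2 * (c : ℂ) - w z) with hg
  have hmaps : MapsTo g (ball (0:ℂ) 1) (ball (0:ℂ) 1) := by
    intro z hz
    have hzd : z ∈ unitDisk := hz
    have hlt : ‖w z‖ < ‖2 * (c : ℂ) - w z‖ := by
      rw [Complex.norm_def, Complex.norm_def]
      apply Real.sqrt_lt_sqrt (Complex.normSq_nonneg _)
      have h1 := hre z hzd
      simp only [Complex.normSq_apply, Complex.sub_re, Complex.sub_im, Complex.mul_re,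
        Complex.mul_im, Complex.ofReal_re, Complex.ofReal_im, Complex.re_ofNat,
        Complex.im_ofNat]
      nlinarith [hcpos]
    simp only [mem_ball, dist_zero_right, hg, norm_div]
    rw [div_lt_one (lt_of_le_of_lt (norm_nonneg _) hlt)]
    exact hlt
  have hgd : DifferentiableOn ℂ g (ball (0:ℂ) 1) := by
    have : AnalyticOnNhd ℂ g unitDisk :=
      hwA.div (analyticOnNhd_const.sub hwA) hne
    exact this.differentiableOn
  have hg0 : g 0 = 0 := by simp [hg, hw]
  have key : ∀ z ∈ unitDisk,
      ‖w z‖ * (1 - ‖z‖) ≤ 2 * c * ‖z‖ := by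
    intro z hz
    have hz1 : ‖z‖ < 1 := by simpa [unitDisk, mem_ball, dist_zero_right] using hz
    have hs := Complex.norm_le_norm_of_mapsTo_ball hgd (hmaps.mono_right ball_subset_closedBall) hg0 hz1
    have hpos : 0 < ‖2 * (c : ℂ) - w z‖ :=
      norm_pos_iff.mpr (hne z hz)
    have hgabs : ‖g z‖ = ‖w z‖ / ‖2 * (c : ℂ) - w z‖ := by
      simp [hg, norm_div]
    rw [hgabs, div_le_iff₀ hpos] at hs
    have htri : ‖2 * (c : ℂ) - w z‖ ≤ 2 * c + ‖w z‖ := by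
      have htr := norm_sub_le (2 * (c : ℂ)) (w z)
      have h2c : ‖2 * (c : ℂ)‖ = 2 * c := by
        rw [norm_mul, Complex.norm_two, Complex.norm_real, Real.norm_eq_abs, abs_of_pos hcpos]
      rw [h2c] at htr
      exact htr
    nlinarith [norm_nonneg (w z), norm_nonneg z, hz1]
  -- bound for nonzero z
  have key2 : ∀ z ∈ unitDisk, z ≠ 0 →
      ‖deriv (deriv f) z / deriv f z‖ ≤ 2 * c / (1 - ‖z‖) := by
    intro z hz hz0
    have hz1 : ‖z‖ < 1 := by simpa [unitDisk, mem_ball, dist_zero_right] using hz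
    have hr : 0 < ‖z‖ := norm_pos_iff.mpr hz0
    have hwab : ‖w z‖
        = ‖z‖ * ‖deriv (deriv f) z / deriv f z‖ := by
      simp [hw, norm_div, norm_mul, mul_div_assoc]
    have hk := key z hz
    rw [hwab] at hk
    rw [le_div_iff₀ (by linarith)]
    nlinarith [norm_nonneg (deriv (deriv f) z / deriv f z)]
  intro z hz
  have hz1 : ‖z‖ < 1 := by simpa [unitDisk, mem_ball, dist_zero_right] using hz
  rcases eq_or_ne z 0 with rfl | hz0
  · -- z = 0 : limit argument
    have h0mem : (0:ℂ) ∈ unitDisk := by simp [unitDisk]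
    have hcont : ContinuousAt (fun z => ‖deriv (deriv f) z / deriv f z‖) 0 := by
      exact continuous_norm.continuousAt.comp
        (((hf''A 0 h0mem).continuousAt).div ((hf'A 0 h0mem).continuousAt) (hB 0 h0mem).1)
    have htend1 : Filter.Tendsto (fun z => ‖deriv (deriv f) z / deriv f z‖)
        (nhdsWithin 0 {(0:ℂ)}ᶜ) (nhds (‖deriv (deriv f) 0 / deriv f 0‖)) :=
      hcont.tendsto.mono_left nhdsWithin_le_nhds
    have htend2 : Filter.Tendsto (fun z : ℂ => 2 * c / (1 - ‖z‖))
        (nhdsWithin 0 {(0:ℂ)}ᶜ) (nhds (2 * c)) := by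
      have h2 : ContinuousAt (fun z : ℂ => 2 * c / (1 - ‖z‖)) 0 :=
        ContinuousAt.div continuousAt_const
          (continuousAt_const.sub continuous_norm.continuousAt) (by simp)
      have := h2.tendsto.mono_left (nhdsWithin_le_nhds (s := {(0:ℂ)}ᶜ))
      simpa using this
    have hev : ∀ᶠ z in nhdsWithin 0 {(0:ℂ)}ᶜ,
        ‖deriv (deriv f) z / deriv f z‖ ≤ 2 * c / (1 - ‖z‖) := by
      have hmem : unitDisk ∈ nhds (0:ℂ) := by
        exact (isOpen_ball.mem_nhds h0mem)
      filter_upwards [nhdsWithin_le_nhds hmem, self_mem_nhdsWithin] with z hzu hzne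
      exact key2 z hzu hzne
    have hle : ‖deriv (deriv f) 0 / deriv f 0‖ ≤ 2 * c :=
      le_of_tendsto_of_tendsto htend1 htend2 hev
    simp only [norm_zero, ne_eq, zero_pow, OfNat.ofNat_ne_zero, not_false_eq_true, sub_zero,
      one_mul]
    calc ‖deriv (deriv f) 0 / deriv f 0‖ ≤ 2 * c := hle
      _ ≤ 2 * (3 * β - 2) := by rw [hc]; linarith
  · have hk := key2 z hz hz0
    have h1 : 0 < 1 - ‖z‖ := by linarith
    rw [le_div_iff₀ h1] at hk
    have habs : (0:ℝ) ≤ ‖z‖ := norm_nonneg z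
    nlinarith [norm_nonneg (deriv (deriv f) z / deriv f z)]
end
end

section
/- Let −1 ≤ B < A ≤ 1 and f ∈ 𝒦(A,B). Then ‖f‖ ≤ N(A,B), where N(A,B) = 2(A−B)(1 − √(1−B²))/B² if B ≠ 0, and N(A,0) = A. -/
open Complex Metric Set

noncomputable section

/-- Subordination `φ ≺ ψ` on the unit disk. -/
def Subordinate (φ ψ : ℂ → ℂ) : Prop :=
  ∃ ω : ℂ → ℂ, AnalyticOnNhd ℂ ω unitDisk ∧ ω 0 = 0 ∧
    (∀ z ∈ unitDisk, ω z ∈ unitDisk) ∧ ∀ z ∈ unitDisk, φ z = ψ (ω z)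

/-- `f ∈ 𝒦(A,B)`: `1 + z f''/f' ≺ (1+Az)/(1+Bz)`. -/
def InK (f : ℂ → ℂ) (A B : ℝ) : Prop :=
  InA f ∧ (∀ z ∈ unitDisk, deriv f z ≠ 0) ∧
  Subordinate (fun z => 1 + z * deriv (deriv f) z / deriv f z)
    (fun z => (1 + (A : ℂ) * z) / (1 + (B : ℂ) * z))

/-- Key real inequality: `(1-r²)/(1-br) ≤ 2(1-√(1-b²))/b²` in product form. -/
lemma keyRealIneq (b r : ℝ) (hb0 : 0 ≤ b) (hb1 : b ≤ 1) (hr0 : 0 ≤ r) (hr1 : r < 1) :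
    b^2 * (1 - r^2) ≤ 2 * (1 - Real.sqrt (1 - b^2)) * (1 - b*r) := by
  set s := Real.sqrt (1 - b^2) with hs
  have hs0 : 0 ≤ s := Real.sqrt_nonneg _
  have hs2 : s^2 = 1 - b^2 := Real.sq_sqrt (by nlinarith [hb0, hb1])
  have key : (1+s)^2 * (2*(1-s)*(1-b*r) - b^2*(1-r^2)) = b^2*((1+s)*r-b)^2 := by
    linear_combination (-(2*(1-b*r)*(1+s) + b^2)) * hs2
  nlinarith [key, mul_nonneg (sq_nonneg b) (sq_nonneg ((1+s)*r-b)), sq_nonneg (1+s)]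

/-- sharp pre-Schwarzian norm estimate for `𝒦(A,B)`. -/
theorem stmt14 (A B : ℝ) (hB : -1 ≤ B) (hBA : B < A) (hA : A ≤ 1)
    (f : ℂ → ℂ) (hf : InK f A B) :
    ∀ z ∈ unitDisk,
      (1 - ‖z‖ ^ 2) * ‖deriv (deriv f) z / deriv f z‖
        ≤ if B = 0 then A
          else 2 * (A - B) * (1 - Real.sqrt (1 - B ^ 2)) / B ^ 2 := by
  obtain ⟨⟨hfa, hf0, hf1⟩, hfd, ω, hωa, hω0, hωmap, hωeq⟩ := hf
  set N : ℝ := if B = 0 then A else 2 * (A - B) * (1 - Real.sqrt (1 - B ^ 2)) / B ^ 2 with hN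
  have hAB : (0:ℝ) < A - B := by linarith
  have hB1 : |B| ≤ 1 := abs_le.2 ⟨hB, by linarith⟩
  have key : ∀ z ∈ unitDisk, z ≠ 0 →
      (1 - ‖z‖ ^ 2) * ‖deriv (deriv f) z / deriv f z‖ ≤ N := by
    intro z hz hz0
    set g : ℂ := deriv (deriv f) z / deriv f z with hg
    set r : ℝ := ‖z‖ with hrdef
    have hr1 : r < 1 := by
      have := mem_ball_zero_iff.1 (show z ∈ ball (0:ℂ) 1 from hz)
      simpa [hrdef] using this
    have hr0 : 0 < r := norm_pos_iff.mpr hz0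
    set w : ℂ := ω z with hwdef
    have hw1 : ‖w‖ < 1 := by
      have := mem_ball_zero_iff.1 (show ω z ∈ ball (0:ℂ) 1 from hωmap z hz)
      simpa [hwdef] using this
    have htr : ‖w‖ ≤ r := by
      have := norm_le_norm_of_mapsTo_ball
        (hωa.differentiableOn) (fun x hx => ball_subset_closedBall (hωmap x hx)) hω0 hr1
      simpa [hwdef, hrdef] using this
    set t : ℝ := ‖w‖ with htdef
    have ht0 : 0 ≤ t := norm_nonneg w
    have hden_pos : 0 < 1 - |B| * r := by nlinarith [abs_nonneg B]
    have hm : 1 - |B| * r ≤ ‖1 + (B:ℂ) * w‖ := by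
      have h := norm_sub_norm_le (1 : ℂ) (-((B:ℂ) * w))
      have h2 : |B| * t ≤ |B| * r := mul_le_mul_of_nonneg_left htr (abs_nonneg B)
      simp only [sub_neg_eq_add, norm_neg, norm_mul, Complex.norm_real, Real.norm_eq_abs,
        norm_one] at h
      linarith
    have hm0 : 0 < ‖1 + (B:ℂ) * w‖ := lt_of_lt_of_le hden_pos hm
    have hne : (1 : ℂ) + (B:ℂ) * w ≠ 0 := norm_pos_iff.1 hm0
    have hd := hfd z hz
    have heq0 : 1 + z * deriv (deriv f) z / deriv f z
        = (1 + (A:ℂ) * w) / (1 + (B:ℂ) * w) := hωeq z hz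
    have heq : z * g = (((A - B : ℝ)):ℂ) * w / (1 + (B:ℂ) * w) := by
      rw [hg, ← mul_div_assoc]
      have h1 := (eq_div_iff hne).1 heq0
      rw [div_eq_div_iff hd hne]
      push_cast
      have h2 : z * deriv (deriv f) z / deriv f z * deriv f z = z * deriv (deriv f) z :=
        div_mul_cancel₀ _ hd
      linear_combination (deriv f z) * h1 - (1 + (B:ℂ) * w) * h2
    have habs : r * ‖g‖ = (A - B) * t / ‖1 + (B:ℂ) * w‖ := by
      have : ‖z * g‖ = ‖(((A - B : ℝ)):ℂ) * w / (1 + (B:ℂ) * w)‖ := by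
        rw [heq]
      rw [norm_mul] at this
      rw [hrdef, htdef, this]
      rw [norm_div, norm_mul, Complex.norm_real, Real.norm_of_nonneg hAB.le]
    have hG0 : 0 ≤ ‖g‖ := norm_nonneg g
    have hGm : r * ‖g‖ * ‖1 + (B:ℂ) * w‖ = (A - B) * t := by
      rw [habs]; field_simp
    have hGle : ‖g‖ * (1 - |B| * r) ≤ A - B := by
      have ha : ‖g‖ * r * (1 - |B| * r) ≤ ‖g‖ * r * ‖1 + (B:ℂ) * w‖ :=
        mul_le_mul_of_nonneg_left hm (mul_nonneg hG0 hr0.le)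
      have hc : (A - B) * t ≤ (A - B) * r := mul_le_mul_of_nonneg_left htr hAB.le
      have h3 : ‖g‖ * (1 - |B| * r) * r ≤ (A - B) * r := by nlinarith [ha, hc, hGm]
      exact le_of_mul_le_mul_right h3 hr0
    rcases eq_or_ne B 0 with h0 | h0
    · rw [hN, if_pos h0]
      rw [h0] at hGle
      simp only [abs_zero, zero_mul, sub_zero, mul_one] at hGle
      nlinarith [sq_nonneg r]
    · rw [hN, if_neg h0]
      have hb0 : 0 < |B| := abs_pos.2 h0
      have hq := keyRealIneq |B| r (abs_nonneg B) hB1 hr0.le hr1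
      rw [_root_.sq_abs] at hq
      have hr2 : (0:ℝ) ≤ 1 - r^2 := by nlinarith
      have hG : ‖g‖ ≤ (A - B) / (1 - |B| * r) := by
        rw [le_div_iff₀ hden_pos]; exact hGle
      have h4 : (1 - r^2) * ‖g‖ ≤ (1 - r^2) * ((A - B) / (1 - |B| * r)) :=
        mul_le_mul_of_nonneg_left hG hr2
      have h5 : (1 - r^2) * ((A - B) / (1 - |B| * r))
          ≤ 2 * (A - B) * (1 - Real.sqrt (1 - B ^ 2)) / B ^ 2 := by
        rw [mul_div_assoc']
        rw [div_le_div_iff₀ hden_pos (by positivity : (0:ℝ) < B^2)]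
        nlinarith [mul_le_mul_of_nonneg_left hq hAB.le]
      calc (1 - r ^ 2) * ‖g‖ ≤ (1 - r^2) * ((A - B) / (1 - |B| * r)) := h4
        _ ≤ _ := h5
  intro z hz
  rcases eq_or_ne z 0 with rfl | hz0
  · have h0mem : (0:ℂ) ∈ unitDisk := by simp [unitDisk]
    have hgc : ContinuousAt (fun z => ‖deriv (deriv f) z / deriv f z‖) 0 := by
      apply continuous_norm.continuousAt.comp
      exact ((hfa.deriv.deriv 0 h0mem).continuousAt).div
        ((hfa.deriv 0 h0mem).continuousAt) (hfd 0 h0mem)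
    have hcont : ContinuousAt
        (fun z => (1 - ‖z‖ ^ 2) * ‖deriv (deriv f) z / deriv f z‖) 0 :=
      (continuousAt_const.sub ((continuous_norm.continuousAt).pow 2)).mul hgc
    have hlim : Filter.Tendsto
        (fun z => (1 - ‖z‖ ^ 2) * ‖deriv (deriv f) z / deriv f z‖)
        (nhdsWithin (0:ℂ) {(0:ℂ)}ᶜ)
        (nhds ((1 - ‖(0:ℂ)‖ ^ 2) * ‖deriv (deriv f) 0 / deriv f 0‖)) :=
      hcont.tendsto.mono_left nhdsWithin_le_nhds
    refine le_of_tendsto hlim ?_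
    have hmem : unitDisk ∈ nhdsWithin (0:ℂ) {(0:ℂ)}ᶜ :=
      nhdsWithin_le_nhds (Metric.isOpen_ball.mem_nhds h0mem)
    filter_upwards [hmem, self_mem_nhdsWithin] with x hx1 hx2
    exact key x hx1 hx2
  · exact key z hz hz0
end
end
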